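/- arXiv:2406.15579 — 6 statements merged into one kernel-verified Lean document; each statement's English description precedes it below -/
import Mathlib

section
/- The Laplace transform L{φ}(x) = ∫₀^∞ e^{−r x} φ(r) dr is bounded from L²(0, ∞) to L²(0, ∞) with operator norm at most √π; i.e., for all φ ∈ L²(0, ∞), ‖L{φ}‖_{L²(0,∞)} ≤ √π · ‖φ‖_{L²(0,∞)}. -/
open MeasureTheory
open scoped ENNReal NNReal

section Aux
open Real Set

lemma key {b : ℝ} (hb : 0 < b) :
    ∫⁻ t in Set.Ioi (0:ℝ), ENNReal.ofReal (t ^ (-(2:ℝ)⁻¹) * Real.exp (-(b * t)))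
      = ENNReal.ofReal ((1/b) ^ ((2:ℝ)⁻¹)) * ENNReal.ofReal (Real.sqrt Real.pi) := by
  have hint : IntegrableOn (fun t : ℝ => t ^ (-(2:ℝ)⁻¹) * Real.exp (-(b * t))) (Set.Ioi 0) := by
    have := integrableOn_rpow_mul_exp_neg_mul_rpow (p := 1) (s := -(2:ℝ)⁻¹) (b := b)
      (by norm_num) zero_lt_one hb
    simpa [Real.rpow_one] using this
  rw [← ofReal_integral_eq_lintegral_ofReal hint]
  · have h2 : ∫ t in Set.Ioi (0:ℝ), t ^ (-(2:ℝ)⁻¹) * Real.exp (-(b * t))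
        = (1/b) ^ ((2:ℝ)⁻¹) * Real.Gamma (2⁻¹) := by
      have := Real.integral_rpow_mul_exp_neg_mul_Ioi (a := (2:ℝ)⁻¹) (r := b) (by norm_num) hb
      rw [← this]
      refine setIntegral_congr_fun measurableSet_Ioi fun t ht => ?_
      norm_num
    rw [h2, ENNReal.ofReal_mul (by positivity)]
    congr 1
    rw [show (2:ℝ)⁻¹ = 1/2 by norm_num, Real.Gamma_one_half_eq]
  · filter_upwards [self_mem_ae_restrict measurableSet_Ioi] with t ht
    have : (0:ℝ) < t := ht
    positivity

lemma pointwise (ψ : ℝ → ℂ) (hψ : Measurable ψ) {x : ℝ} (hx : 0 < x) :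
    (‖∫ r in Set.Ioi (0:ℝ), Complex.exp (-(r * x)) * ψ r‖₊ : ℝ≥0∞) ^ (2:ℝ)
      ≤ (ENNReal.ofReal ((1/x) ^ ((2:ℝ)⁻¹)) * ENNReal.ofReal (Real.sqrt Real.pi)) *
        ∫⁻ r in Set.Ioi (0:ℝ),
          ENNReal.ofReal (r ^ ((2:ℝ)⁻¹) * Real.exp (-(x*r))) * (‖ψ r‖₊ : ℝ≥0∞) ^ (2:ℝ) := by
  set μ := volume.restrict (Set.Ioi (0:ℝ))
  set f : ℝ → ℝ≥0∞ := fun r => ENNReal.ofReal (r ^ (-(4:ℝ)⁻¹) * Real.exp (-(x*r)/2)) with hf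
  set g : ℝ → ℝ≥0∞ :=
    fun r => ENNReal.ofReal (r ^ ((4:ℝ)⁻¹) * Real.exp (-(x*r)/2)) * (‖ψ r‖₊ : ℝ≥0∞) with hg
  have hfm : Measurable f := by
    apply ENNReal.measurable_ofReal.comp
    fun_prop
  have hgm : Measurable g := by
    rw [hg]
    apply Measurable.mul (f := fun r => ENNReal.ofReal (r ^ ((4:ℝ)⁻¹) * Real.exp (-(x*r)/2)))
      (g := fun r => (‖ψ r‖₊ : ℝ≥0∞))
    · apply ENNReal.measurable_ofReal.comp
      fun_prop
    · exact (hψ.nnnorm).coe_nnreal_ennreal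
  have step1 : (‖∫ r in Set.Ioi (0:ℝ), Complex.exp (-(r * x)) * ψ r‖₊ : ℝ≥0∞)
      ≤ ∫⁻ r, f r * g r ∂μ := by
    refine le_trans (enorm_integral_le_lintegral_enorm _) (le_of_eq ?_)
    apply lintegral_congr_ae
    filter_upwards [self_mem_ae_restrict measurableSet_Ioi] with r hr
    have hr' : (0:ℝ) < r := hr
    have h1 : ((‖Complex.exp (-(↑r * ↑x : ℂ)) * ψ r‖₊ : ℝ≥0∞))
        = ENNReal.ofReal (Real.exp (-(x*r))) * (‖ψ r‖₊ : ℝ≥0∞) := by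
      rw [nnnorm_mul, ENNReal.coe_mul]
      congr 1
      rw [← enorm_eq_nnnorm, ← ofReal_norm, Complex.norm_exp]
      congr 2
      simp [mul_comm]
    rw [enorm_eq_nnnorm, h1, hf, hg, ← mul_assoc, ← ENNReal.ofReal_mul (by positivity)]
    congr 2
    rw [show r ^ (-(4:ℝ)⁻¹) * Real.exp (-(x*r)/2) * (r ^ ((4:ℝ)⁻¹) * Real.exp (-(x*r)/2))
        = (r ^ (-(4:ℝ)⁻¹) * r ^ ((4:ℝ)⁻¹)) * (Real.exp (-(x*r)/2) * Real.exp (-(x*r)/2)) by ring,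
      ← Real.rpow_add hr', ← Real.exp_add]
    norm_num
  have holder := ENNReal.lintegral_mul_le_Lp_mul_Lq μ
    (by constructor <;> norm_num : Real.HolderConjugate 2 2)
    hfm.aemeasurable hgm.aemeasurable
  have hA : ∫⁻ r, f r ^ (2:ℝ) ∂μ
      = ENNReal.ofReal ((1/x) ^ ((2:ℝ)⁻¹)) * ENNReal.ofReal (Real.sqrt Real.pi) := by
    rw [← key hx]
    apply lintegral_congr_ae
    filter_upwards [self_mem_ae_restrict measurableSet_Ioi] with r hr
    have hr' : (0:ℝ) < r := hr
    rw [hf, ENNReal.ofReal_rpow_of_nonneg (by positivity) (by norm_num),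
      Real.mul_rpow (by positivity) (by positivity), ← Real.rpow_mul hr'.le, ← Real.exp_mul]
    norm_num
  have hB : ∫⁻ r, g r ^ (2:ℝ) ∂μ
      = ∫⁻ r in Set.Ioi (0:ℝ),
          ENNReal.ofReal (r ^ ((2:ℝ)⁻¹) * Real.exp (-(x*r))) * (‖ψ r‖₊ : ℝ≥0∞) ^ (2:ℝ) := by
    apply lintegral_congr_ae
    filter_upwards [self_mem_ae_restrict measurableSet_Ioi] with r hr
    have hr' : (0:ℝ) < r := hr
    rw [hg, ENNReal.mul_rpow_of_nonneg _ _ (by norm_num),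
      ENNReal.ofReal_rpow_of_nonneg (by positivity) (by norm_num),
      Real.mul_rpow (by positivity) (by positivity), ← Real.rpow_mul hr'.le, ← Real.exp_mul]
    norm_num
  have step2 : (‖∫ r in Set.Ioi (0:ℝ), Complex.exp (-(r * x)) * ψ r‖₊ : ℝ≥0∞)
      ≤ ((ENNReal.ofReal ((1/x) ^ ((2:ℝ)⁻¹)) * ENNReal.ofReal (Real.sqrt Real.pi)) ^ ((1:ℝ)/2)) *
        ((∫⁻ r in Set.Ioi (0:ℝ),
          ENNReal.ofReal (r ^ ((2:ℝ)⁻¹) * Real.exp (-(x*r))) * (‖ψ r‖₊ : ℝ≥0∞) ^ (2:ℝ)) ^ ((1:ℝ)/2)) := by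
    refine step1.trans (le_trans (le_of_eq ?_) (holder.trans_eq ?_))
    · rfl
    · rw [hA, hB]
  calc (‖∫ r in Set.Ioi (0:ℝ), Complex.exp (-(r * x)) * ψ r‖₊ : ℝ≥0∞) ^ (2:ℝ)
      ≤ (((ENNReal.ofReal ((1/x) ^ ((2:ℝ)⁻¹)) * ENNReal.ofReal (Real.sqrt Real.pi)) ^ ((1:ℝ)/2)) *
        ((∫⁻ r in Set.Ioi (0:ℝ),
          ENNReal.ofReal (r ^ ((2:ℝ)⁻¹) * Real.exp (-(x*r))) * (‖ψ r‖₊ : ℝ≥0∞) ^ (2:ℝ)) ^ ((1:ℝ)/2))) ^ (2:ℝ) :=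
        ENNReal.rpow_le_rpow step2 (by norm_num)
    _ = _ := by
        rw [ENNReal.mul_rpow_of_nonneg _ _ (by norm_num : (0:ℝ) ≤ 2),
          ← ENNReal.rpow_mul, ← ENNReal.rpow_mul]
        norm_num
        rfl

lemma main (ψ : ℝ → ℂ) (hψ : Measurable ψ) :
    ∫⁻ x in Set.Ioi (0:ℝ),
        (‖∫ r in Set.Ioi (0:ℝ), Complex.exp (-(r * x)) * ψ r‖₊ : ℝ≥0∞) ^ (2:ℝ)
      ≤ ENNReal.ofReal Real.pi * ∫⁻ r in Set.Ioi (0:ℝ), (‖ψ r‖₊ : ℝ≥0∞) ^ (2:ℝ) := by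
  set μ := volume.restrict (Set.Ioi (0:ℝ))
  set F : ℝ → ℝ≥0∞ := fun r => (‖ψ r‖₊ : ℝ≥0∞) ^ (2:ℝ) with hF
  have hFm : Measurable F := (hψ.nnnorm.coe_nnreal_ennreal).pow_const _
  set H : ℝ → ℝ → ℝ≥0∞ := fun x r =>
    ENNReal.ofReal ((1/x) ^ ((2:ℝ)⁻¹)) *
      (ENNReal.ofReal (r ^ ((2:ℝ)⁻¹) * Real.exp (-(x*r))) * F r) with hH
  have hHm : AEMeasurable (fun p : ℝ × ℝ => H p.1 p.2) (μ.prod μ) := by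
    apply Measurable.aemeasurable
    apply Measurable.mul
    · apply ENNReal.measurable_ofReal.comp
      fun_prop
    · apply Measurable.mul
      · apply ENNReal.measurable_ofReal.comp
        fun_prop
      · exact hFm.comp measurable_snd
  have step1 : ∫⁻ x in Set.Ioi (0:ℝ),
        (‖∫ r in Set.Ioi (0:ℝ), Complex.exp (-(r * x)) * ψ r‖₊ : ℝ≥0∞) ^ (2:ℝ)
      ≤ ∫⁻ x, ENNReal.ofReal (Real.sqrt Real.pi) * ∫⁻ r, H x r ∂μ ∂μ := by
    apply lintegral_mono_ae
    filter_upwards [self_mem_ae_restrict measurableSet_Ioi] with x hx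
    have hx' : (0:ℝ) < x := hx
    refine (pointwise ψ hψ hx').trans (le_of_eq ?_)
    rw [mul_comm (ENNReal.ofReal ((1/x) ^ ((2:ℝ)⁻¹))), mul_assoc]
    congr 1
    rw [hH, ← lintegral_const_mul' _ _ ENNReal.ofReal_ne_top]
  have swap : ∫⁻ x, ∫⁻ r, H x r ∂μ ∂μ = ∫⁻ r, ∫⁻ x, H x r ∂μ ∂μ :=
    lintegral_lintegral_swap hHm
  have inner : ∀ r : ℝ, 0 < r →
      ∫⁻ x, H x r ∂μ = ENNReal.ofReal (Real.sqrt Real.pi) * F r := by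
    intro r hr
    have congr1 : ∫⁻ x, H x r ∂μ
        = ∫⁻ x, ENNReal.ofReal (x ^ (-(2:ℝ)⁻¹) * Real.exp (-(r*x))) *
            (ENNReal.ofReal (r ^ ((2:ℝ)⁻¹)) * F r) ∂μ := by
      apply lintegral_congr_ae
      filter_upwards [self_mem_ae_restrict measurableSet_Ioi] with x hx
      have hx' : (0:ℝ) < x := hx
      simp only [hH]
      rw [ENNReal.ofReal_mul (by positivity : (0:ℝ) ≤ r ^ ((2:ℝ)⁻¹)), mul_comm x r,
        show (1/x : ℝ) ^ ((2:ℝ)⁻¹) = x ^ (-(2:ℝ)⁻¹) by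
          rw [one_div, Real.rpow_neg hx'.le, Real.inv_rpow hx'.le],
        ENNReal.ofReal_mul (by positivity : (0:ℝ) ≤ x ^ (-(2:ℝ)⁻¹))]
      ring
    rw [congr1, lintegral_mul_const' _ _ (by
        exact ENNReal.mul_ne_top ENNReal.ofReal_ne_top
          (by rw [hF]; exact (ENNReal.rpow_lt_top_of_nonneg (by norm_num)
            ENNReal.coe_ne_top).ne)),
      key hr, mul_assoc, mul_comm (ENNReal.ofReal (Real.sqrt Real.pi)), mul_assoc, ← mul_assoc,
      ← ENNReal.ofReal_mul (by positivity), ← Real.mul_rpow (by positivity) hr.le,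
      one_div_mul_cancel hr.ne', Real.one_rpow, ENNReal.ofReal_one, one_mul, mul_comm]
  calc ∫⁻ x in Set.Ioi (0:ℝ),
        (‖∫ r in Set.Ioi (0:ℝ), Complex.exp (-(r * x)) * ψ r‖₊ : ℝ≥0∞) ^ (2:ℝ)
      ≤ ∫⁻ x, ENNReal.ofReal (Real.sqrt Real.pi) * ∫⁻ r, H x r ∂μ ∂μ := step1
    _ = ENNReal.ofReal (Real.sqrt Real.pi) * ∫⁻ r, ∫⁻ x, H x r ∂μ ∂μ := by
        rw [lintegral_const_mul' _ _ ENNReal.ofReal_ne_top, swap]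
    _ = ENNReal.ofReal (Real.sqrt Real.pi) *
          ∫⁻ r, ENNReal.ofReal (Real.sqrt Real.pi) * F r ∂μ := by
        congr 1
        apply lintegral_congr_ae
        filter_upwards [self_mem_ae_restrict measurableSet_Ioi] with r hr
        exact inner r hr
    _ = ENNReal.ofReal Real.pi * ∫⁻ r, F r ∂μ := by
        rw [lintegral_const_mul' _ _ ENNReal.ofReal_ne_top, ← mul_assoc,
          ← ENNReal.ofReal_mul (Real.sqrt_nonneg _), Real.mul_self_sqrt Real.pi_nonneg]

end Aux

/-- (Hardy) The Laplace transform `L{φ}(x) = ∫₀^∞ e^{−r x} φ(r) dr` is bounded from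
`L²(0, ∞)` to `L²(0, ∞)` with norm at most `√π`. -/
theorem stmt2 (φ : ℝ → ℂ) (hφ : MemLp φ 2 (volume.restrict (Set.Ioi (0 : ℝ)))) :
    eLpNorm (fun x : ℝ => ∫ r in Set.Ioi (0 : ℝ), Complex.exp (-(r * x)) * φ r) 2
        (volume.restrict (Set.Ioi (0 : ℝ)))
      ≤ ENNReal.ofReal (Real.sqrt Real.pi) *
        eLpNorm φ 2 (volume.restrict (Set.Ioi (0 : ℝ))) := by
  obtain ⟨ψ, hψm, hae⟩ : ∃ ψ, StronglyMeasurable ψ ∧ φ =ᵐ[volume.restrict (Set.Ioi (0:ℝ))] ψ :=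
    ⟨hφ.1.mk φ, hφ.1.stronglyMeasurable_mk, hφ.1.ae_eq_mk⟩
  have hint : (fun x : ℝ => ∫ r in Set.Ioi (0:ℝ), Complex.exp (-(r * x)) * φ r)
      = fun x : ℝ => ∫ r in Set.Ioi (0:ℝ), Complex.exp (-(r * x)) * ψ r := by
    funext x
    exact integral_congr_ae (hae.mono fun r h => by simp only []; rw [h])
  rw [hint, eLpNorm_congr_ae hae,
    eLpNorm_eq_lintegral_rpow_enorm_toReal two_ne_zero ENNReal.ofNat_ne_top,
    eLpNorm_eq_lintegral_rpow_enorm_toReal two_ne_zero ENNReal.ofNat_ne_top]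
  simp only [ENNReal.toReal_ofNat]
  calc (∫⁻ x in Set.Ioi (0:ℝ),
        (‖∫ r in Set.Ioi (0:ℝ), Complex.exp (-(r * x)) * ψ r‖₊ : ℝ≥0∞) ^ (2:ℝ)) ^ ((1:ℝ)/2)
      ≤ (ENNReal.ofReal Real.pi *
          ∫⁻ r in Set.Ioi (0:ℝ), (‖ψ r‖₊ : ℝ≥0∞) ^ (2:ℝ)) ^ ((1:ℝ)/2) :=
        ENNReal.rpow_le_rpow (main ψ hψm.measurable) (by norm_num)
    _ = ENNReal.ofReal (Real.sqrt Real.pi) *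
          (∫⁻ r in Set.Ioi (0:ℝ), (‖ψ r‖₊ : ℝ≥0∞) ^ (2:ℝ)) ^ ((1:ℝ)/2) := by
        rw [ENNReal.mul_rpow_of_nonneg _ _ (by norm_num : (0:ℝ) ≤ 1/2),
          ENNReal.ofReal_rpow_of_nonneg Real.pi_nonneg (by norm_num),
          ← Real.sqrt_eq_rpow]
end

section
/- With ν₀ = k and ν± defined as the nontrivial symmetries of ω, one has the identity Im(ω(k)) = −β · Im(ν₀) · Im(ν₊) · Im(ν₋) · (1 + 3 [Im(w)]² / [Im(k)]²) whenever Im(k) ≠ 0 and w is the chosen square root; equivalently, off the real axis and off the branch cut, Im(ω(k)) < 0 if and only if Im(ν₀) Im(ν₊) Im(ν₋) > 0. -/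
noncomputable def omegaC (β α δ : ℝ) (z : ℂ) : ℂ :=
  (β : ℂ) * z ^ 3 - (α : ℂ) * z ^ 2 - (δ : ℂ) * z

noncomputable def nuPlus (β α : ℝ) (k w : ℂ) : ℂ :=
  -(1 / 2) * (k - (α : ℂ) / (β : ℂ)) + (Real.sqrt 3 / 2 : ℂ) * Complex.I * w

noncomputable def nuMinus (β α : ℝ) (k w : ℂ) : ℂ :=
  -(1 / 2) * (k - (α : ℂ) / (β : ℂ)) - (Real.sqrt 3 / 2 : ℂ) * Complex.I * w

/-- Off the real axis, `Im ω(k) = −β Im(ν₀) Im(ν₊) Im(ν₋) (1 + 3 Im(w)²/Im(k)²)`;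
in particular `Im ω(k) < 0` iff `Im(ν₀) Im(ν₊) Im(ν₋) > 0`. -/
theorem stmt5 (β α δ : ℝ) (hβ : 0 < β) (k w : ℂ) (hk : k.im ≠ 0)
    (hw : w ^ 2 = (k - (α : ℂ) / (3 * (β : ℂ))) ^ 2
        - (4 / (9 * (β : ℂ) ^ 2)) * ((α : ℂ) ^ 2 + 3 * (β : ℂ) * (δ : ℂ))) :
    (omegaC β α δ k).im =
      -β * k.im * (nuPlus β α k w).im * (nuMinus β α k w).im
        * (1 + 3 * w.im ^ 2 / k.im ^ 2) ∧
    ((omegaC β α δ k).im < 0 ↔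
      0 < k.im * (nuPlus β α k w).im * (nuMinus β α k w).im) := by
  have hβ0 : β ≠ 0 := ne_of_gt hβ
  have hβc : (β:ℂ) ≠ 0 := by exact_mod_cast hβ0
  set x := k.re with hxdef
  set y := k.im with hydef
  set u := w.re with hudef
  set v := w.im with hvdef
  -- clear denominators in hw
  have h' : (9*(β:ℂ)^2) * w^2 = (3*(β:ℂ)*k - (α:ℂ))^2 - 4*((α:ℂ)^2+3*(β:ℂ)*(δ:ℂ)) := by
    rw [hw]; field_simp; ring
  simp only [Complex.ext_iff, pow_two, Complex.mul_re, Complex.mul_im, Complex.sub_re,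
    Complex.sub_im, Complex.ofReal_re, Complex.ofReal_im, Complex.re_ofNat, Complex.im_ofNat,
    Complex.add_re, Complex.add_im] at h'
  obtain ⟨H2, H1⟩ := h'
  norm_num at H1 H2
  -- clean forms
  have Hp : β*(u*v) = y*(β*x - α/3) := by
    have h18 : (18:ℝ)*β ≠ 0 := by positivity
    apply mul_left_cancel₀ h18
    linear_combination H1
  -- imaginary parts
  have hOm : (omegaC β α δ k).im = 3*β*x^2*y - β*y^3 - 2*α*x*y - δ*y := by
    simp only [omegaC, Complex.sub_im, Complex.mul_im, Complex.mul_re, Complex.ofReal_re,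
      Complex.ofReal_im, pow_succ, pow_zero, one_mul, Complex.one_re]
    ring
  have hP : (nuPlus β α k w).im = -(1/2)*y + (Real.sqrt 3/2)*u := by
    simp only [nuPlus, Complex.add_im, Complex.sub_im, Complex.mul_im, Complex.mul_re,
      Complex.neg_re, Complex.neg_im, Complex.div_ofNat_im, Complex.div_ofNat_re,
      Complex.one_re, Complex.one_im, Complex.ofReal_re, Complex.ofReal_im,
      Complex.I_re, Complex.I_im, Complex.div_re, Complex.div_im]
    norm_num
    rfl
  have hM : (nuMinus β α k w).im = -(1/2)*y - (Real.sqrt 3/2)*u := by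
    simp only [nuMinus, Complex.add_im, Complex.sub_im, Complex.mul_im, Complex.mul_re,
      Complex.neg_re, Complex.neg_im, Complex.div_ofNat_im, Complex.div_ofNat_re,
      Complex.one_re, Complex.one_im, Complex.ofReal_re, Complex.ofReal_im,
      Complex.I_re, Complex.I_im, Complex.div_re, Complex.div_im]
    norm_num
    rfl
  have hs3 : Real.sqrt 3 ^ 2 = 3 := Real.sq_sqrt (by norm_num)
  have hPM : (nuPlus β α k w).im * (nuMinus β α k w).im = (y^2 - 3*u^2)/4 := by
    rw [hP, hM]
    linear_combination (-(u^2)/4) * hs3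
  -- key polynomial identity (multiplied by β to keep coefficients polynomial)
  have keyβ : β*(4*y*(3*β*x^2*y - β*y^3 - 2*α*x*y - δ*y))
      = β*(-(β*(y^2-3*u^2)*(y^2+3*v^2))) := by
    linear_combination (-9*(β*(u*v) + y*(β*x - α/3))) * Hp + (-(y^2)/3) * H2
  have key : 4*y*(3*β*x^2*y - β*y^3 - 2*α*x*y - δ*y) = -(β*(y^2-3*u^2)*(y^2+3*v^2)) :=
    mul_left_cancel₀ hβ0 keyβ
  have goal1 : (omegaC β α δ k).im =
      -β * y * (nuPlus β α k w).im * (nuMinus β α k w).im * (1 + 3 * v ^ 2 / y ^ 2) := by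
    rw [hOm]
    rw [show -β * y * (nuPlus β α k w).im * (nuMinus β α k w).im * (1 + 3 * v ^ 2 / y ^ 2)
        = -β * y * ((nuPlus β α k w).im * (nuMinus β α k w).im) * (1 + 3 * v ^ 2 / y ^ 2) by ring,
      hPM]
    field_simp
    linear_combination key
  refine ⟨goal1, ?_⟩
  have hQ : 0 < 1 + 3 * v ^ 2 / y ^ 2 := by positivity
  have hrw : -β * y * (nuPlus β α k w).im * (nuMinus β α k w).im * (1 + 3 * v ^ 2 / y ^ 2)
      = -((β * (1 + 3 * v ^ 2 / y ^ 2)) * (y * (nuPlus β α k w).im * (nuMinus β α k w).im)) := by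
    ring
  rw [goal1, hrw, neg_lt_zero]
  exact mul_pos_iff_of_pos_left (mul_pos hβ hQ)
end

section
/- With the notation z = k − α/(3β) and c = (α² + 3βδ)/(3β²), the product of the imaginary parts of the two nontrivial symmetries satisfies Im(ν₊)·Im(ν₋) = H(k)·Z(k), where H(k) = c + (Im k)² − 3 (Re z)² and Z(k) = (Im k)² / ( (Im k)² + 3 [Im(w)]² ), provided Im(k) ≠ 0 and w² = z² − (4/3)c with the denominator nonzero. -/
/-- With `z = k − α/(3β)` and `c = (α² + 3βδ)/(3β²)`,
`Im(ν₊)·Im(ν₋) = H(k)·Z(k)` where `H(k) = c + (Im k)² − 3 (Re z)²` and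
`Z(k) = (Im k)² / ((Im k)² + 3 (Im w)²)`, provided `Im k ≠ 0` and `w² = z² − (4/3)c`. -/
theorem stmt6 (β α δ : ℝ) (hβ : 0 < β) (k w : ℂ) (hk : k.im ≠ 0)
    (hw : w ^ 2 = (k - (α : ℂ) / (3 * (β : ℂ))) ^ 2
        - (4 / 3 : ℂ) * (((α ^ 2 + 3 * β * δ) / (3 * β ^ 2) : ℝ) : ℂ)) :
    (nuPlus β α k w).im * (nuMinus β α k w).im =
      ((α ^ 2 + 3 * β * δ) / (3 * β ^ 2) + k.im ^ 2
          - 3 * (k - (α : ℂ) / (3 * (β : ℂ))).re ^ 2)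
        * (k.im ^ 2 / (k.im ^ 2 + 3 * w.im ^ 2)) := by
  have hre := congrArg Complex.re hw
  have him := congrArg Complex.im hw
  set c : ℝ := (α ^ 2 + 3 * β * δ) / (3 * β ^ 2) with hc
  set z : ℂ := k - (α : ℂ) / (3 * (β : ℂ)) with hz
  have hcast : (α : ℂ) / (3 * (β : ℂ)) = ((α / (3 * β) : ℝ) : ℂ) := by push_cast; ring
  have hzim : z.im = k.im := by rw [hz]; simp [Complex.div_im]
  have hre' : w.re ^ 2 - w.im ^ 2 = z.re ^ 2 - k.im ^ 2 - (4 / 3) * c := by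
    simpa [pow_two, Complex.mul_re, Complex.sub_re, Complex.sub_im, hzim,
      Complex.ofReal_re, Complex.ofReal_im] using hre
  have him' : w.re * w.im = z.re * k.im := by
    have := him
    simp [pow_two, Complex.mul_im, Complex.sub_im, hzim,
      Complex.ofReal_re, Complex.ofReal_im] at this
    linarith
  have h3 : (Real.sqrt 3) ^ 2 = 3 := Real.sq_sqrt (by norm_num)
  have hplus : (nuPlus β α k w).im = -(1 / 2) * k.im + (Real.sqrt 3 / 2) * w.re := by
    simp [nuPlus, Complex.add_im, Complex.mul_im, Complex.mul_re, Complex.sub_im,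
      Complex.I_re, Complex.I_im, Complex.ofReal_re, Complex.ofReal_im, Complex.div_im]
  have hminus : (nuMinus β α k w).im = -(1 / 2) * k.im - (Real.sqrt 3 / 2) * w.re := by
    simp [nuMinus, Complex.sub_im, Complex.mul_im, Complex.mul_re,
      Complex.I_re, Complex.I_im, Complex.ofReal_re, Complex.ofReal_im, Complex.div_im]
  have hden : k.im ^ 2 + 3 * w.im ^ 2 ≠ 0 := by positivity
  have hsq : (w.re * w.im) ^ 2 = (z.re * k.im) ^ 2 := by rw [him']
  have key : (-(1 / 2) * k.im + Real.sqrt 3 / 2 * w.re) *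
      (-(1 / 2) * k.im - Real.sqrt 3 / 2 * w.re) * (k.im ^ 2 + 3 * w.im ^ 2) =
      (c + k.im ^ 2 - 3 * z.re ^ 2) * k.im ^ 2 := by
    linear_combination (-(w.re ^ 2 * k.im ^ 2) / 4 - 3 / 4 * w.re ^ 2 * w.im ^ 2) * h3
      + (-9 / 4 : ℝ) * hsq + (-3 / 4 * k.im ^ 2) * hre'
  rw [hplus, hminus, mul_div_assoc', ← key, mul_div_assoc, div_self hden, mul_one]
end

section
/- (Mean value identity for the power nonlinearity) For any complex numbers u₁, u₂ and any real λ ≥ 1, one has |u₁|^{λ−1} u₁ − |u₂|^{λ−1} u₂ = ((λ+1)/2) (∫₀¹ |Z_τ|^{λ−1} dτ)(u₁ − u₂) + ((λ−1)/2) (∫₀¹ |Z_τ|^{λ−3} Z_τ² dτ) · conj(u₁ − u₂), where Z_τ = τ u₁ + (1 − τ) u₂. -/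
open MeasureTheory intervalIntegral Set Filter Topology

noncomputable def Zc (u₁ u₂ : ℂ) (τ : ℝ) : ℂ := (τ : ℂ) * u₁ + (1 - (τ : ℂ)) * u₂

lemma Zc_eq (u₁ u₂ : ℂ) (τ : ℝ) : Zc u₁ u₂ τ = (τ : ℂ) * (u₁ - u₂) + u₂ := by
  simp only [Zc]; ring

lemma hasDerivAt_Zc (u₁ u₂ : ℂ) (τ : ℝ) : HasDerivAt (Zc u₁ u₂) (u₁ - u₂) τ := by
  have h : HasDerivAt (fun t : ℝ => (t : ℂ)) 1 τ := by
    simpa using (hasDerivAt_id τ).ofReal_comp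
  have h2 := (h.mul_const (u₁ - u₂)).add_const u₂
  rw [one_mul] at h2
  have : (fun t : ℝ => (t : ℂ) * (u₁ - u₂) + u₂) = Zc u₁ u₂ := by
    funext t; rw [Zc_eq]
  rwa [this] at h2

lemma abs_rpow_eq (z : ℂ) (p : ℝ) :
    ‖z‖ ^ p = Complex.normSq z ^ (p / 2) := by
  rw [Complex.norm_def, Real.sqrt_eq_rpow, ← Real.rpow_mul (Complex.normSq_nonneg z),
    one_div, inv_mul_eq_div]

lemma keyDeriv (lam : ℝ) (hlam : 1 < lam) (u₁ u₂ : ℂ) (τ : ℝ) :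
    HasDerivAt (fun t : ℝ => ((‖Zc u₁ u₂ t‖ ^ (lam - 1) : ℝ) : ℂ) * Zc u₁ u₂ t)
      ((((lam + 1) / 2 : ℝ) : ℂ) * ((‖Zc u₁ u₂ τ‖ ^ (lam - 1) : ℝ) : ℂ) * (u₁ - u₂)
        + (((lam - 1) / 2 : ℝ) : ℂ) *
            (((‖Zc u₁ u₂ τ‖ ^ (lam - 3) : ℝ) : ℂ) * (Zc u₁ u₂ τ) ^ 2) *
            (starRingEnd ℂ) (u₁ - u₂)) τ := by
  by_cases hZ0 : Zc u₁ u₂ τ = 0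
  · -- zero case
    have hlam1 : lam - 1 ≠ 0 := by linarith
    have hval : (((lam + 1) / 2 : ℝ) : ℂ) * ((‖Zc u₁ u₂ τ‖ ^ (lam - 1) : ℝ) : ℂ) * (u₁ - u₂)
        + (((lam - 1) / 2 : ℝ) : ℂ) *
            (((‖Zc u₁ u₂ τ‖ ^ (lam - 3) : ℝ) : ℂ) * (Zc u₁ u₂ τ) ^ 2) *
            (starRingEnd ℂ) (u₁ - u₂) = 0 := by
      rw [hZ0]
      simp [Real.zero_rpow hlam1]
    rw [hval]
    set w := u₁ - u₂ with hw
    have hu₂ : u₂ = -((τ : ℂ) * w) := by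
      rw [Zc_eq, ← hw] at hZ0
      linear_combination hZ0
    have hZfun : ∀ σ : ℝ, Zc u₁ u₂ σ = ((σ - τ : ℝ) : ℂ) * w := by
      intro σ
      rw [Zc_eq, ← hw, hu₂]
      push_cast
      ring
    rw [hasDerivAt_iff_tendsto]
    have hgτ : ((‖Zc u₁ u₂ τ‖ ^ (lam - 1) : ℝ) : ℂ) * Zc u₁ u₂ τ = 0 := by
      rw [hZ0, mul_zero]
    set aw := ‖w‖ with haw
    have hB : Tendsto (fun σ : ℝ => |σ - τ| ^ (lam - 1) * (aw ^ (lam - 1) * aw))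
        (𝓝 τ) (𝓝 0) := by
      have h1 : ContinuousAt (fun x : ℝ => x ^ (lam - 1)) 0 :=
        Real.continuousAt_rpow_const 0 _ (Or.inr (by linarith))
      have h2 : Tendsto (fun σ : ℝ => |σ - τ|) (𝓝 τ) (𝓝 0) := by
        have h0 : Tendsto (fun σ : ℝ => σ - τ) (𝓝 τ) (𝓝 0) := by
          simpa using (continuous_sub_right τ).tendsto τ
        simpa using h0.abs
      have h3 := (h1.tendsto.comp h2).mul_const (aw ^ (lam - 1) * aw)
      simpa [Real.zero_rpow hlam1] using h3
    apply squeeze_zero (fun σ => by positivity) _ hB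
    intro σ
    rcases eq_or_ne σ τ with rfl | hστ
    · simp [hgτ]
      positivity
    · have hd : (0:ℝ) < |σ - τ| := abs_pos.mpr (sub_ne_zero.mpr hστ)
      have habs : ‖Zc u₁ u₂ σ‖ = |σ - τ| * aw := by
        rw [hZfun σ, norm_mul, Complex.norm_real, Real.norm_eq_abs, haw]
      rw [hgτ, smul_zero, sub_zero, sub_zero]
      rw [norm_mul, Complex.norm_real, Real.norm_eq_abs, Real.norm_eq_abs,
        abs_of_nonneg (Real.rpow_nonneg (norm_nonneg _) _), habs]
      have hnZ : ‖Zc u₁ u₂ σ‖ = |σ - τ| * aw := habs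
      rw [Real.mul_rpow hd.le (norm_nonneg _)]
      apply le_of_eq
      field_simp
      ring
  · -- nonzero case
    set w := u₁ - u₂ with hw
    have hZ := hasDerivAt_Zc u₁ u₂ τ
    rw [← hw] at hZ
    have hre : HasDerivAt (fun t : ℝ => (Zc u₁ u₂ t).re) w.re τ :=
      Complex.reCLM.hasFDerivAt.comp_hasDerivAt τ hZ
    have him : HasDerivAt (fun t : ℝ => (Zc u₁ u₂ t).im) w.im τ :=
      Complex.imCLM.hasFDerivAt.comp_hasDerivAt τ hZ
    have hN : HasDerivAt (fun t : ℝ => Complex.normSq (Zc u₁ u₂ t))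
        (w.re * (Zc u₁ u₂ τ).re + (Zc u₁ u₂ τ).re * w.re
          + (w.im * (Zc u₁ u₂ τ).im + (Zc u₁ u₂ τ).im * w.im)) τ := by
      simp only [Complex.normSq_apply]
      exact (hre.mul hre).add (him.mul him)
    have hNpos : 0 < Complex.normSq (Zc u₁ u₂ τ) := Complex.normSq_pos.mpr hZ0
    have hpow := hN.rpow_const (p := (lam - 1) / 2) (Or.inl hNpos.ne')
    have hmul := hpow.ofReal_comp.mul hZ
    have hfun : (fun t : ℝ => ((‖Zc u₁ u₂ t‖ ^ (lam - 1) : ℝ) : ℂ) * Zc u₁ u₂ t)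
        = fun t : ℝ => ((Complex.normSq (Zc u₁ u₂ t) ^ ((lam - 1) / 2) : ℝ) : ℂ) * Zc u₁ u₂ t := by
      funext t; rw [abs_rpow_eq]
    rw [hfun]
    set s := ‖Zc u₁ u₂ τ‖ with hs
    have hspos : 0 < s := norm_pos_iff.mpr hZ0
    have e1 : Complex.normSq (Zc u₁ u₂ τ) ^ ((lam - 1) / 2) = s ^ (lam - 1) :=
      (abs_rpow_eq _ _).symm
    have e2 : Complex.normSq (Zc u₁ u₂ τ) ^ ((lam - 1) / 2 - 1) = s ^ (lam - 3) := by
      have h32 : (lam - 1) / 2 - 1 = (lam - 3) / 2 := by ring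
      rw [h32, ← abs_rpow_eq]
    set Z := Zc u₁ u₂ τ with hZdef
    have e3 : ((w.re * Z.re + Z.re * w.re + (w.im * Z.im + Z.im * w.im) : ℝ) : ℂ)
        = (starRingEnd ℂ) w * Z + w * (starRingEnd ℂ) Z := by
      apply Complex.ext <;>
        simp [Complex.mul_re, Complex.mul_im, Complex.add_re, Complex.add_im] <;> ring
    have e4 : ((s ^ (lam - 1) : ℝ) : ℂ) = ((s ^ (lam - 3) : ℝ) : ℂ) * (Z * (starRingEnd ℂ) Z) := by
      rw [Complex.mul_conj, ← Complex.ofReal_mul]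
      congr 1
      rw [Complex.normSq_eq_norm_sq, ← hs, ← Real.rpow_natCast s 2, ← Real.rpow_add hspos]
      congr 1
      push_cast
      ring
    have hval : (((w.re * Z.re + Z.re * w.re + (w.im * Z.im + Z.im * w.im)) * ((lam - 1) / 2)
          * Complex.normSq Z ^ ((lam - 1) / 2 - 1) : ℝ) : ℂ) * Z
          + ((Complex.normSq Z ^ ((lam - 1) / 2) : ℝ) : ℂ) * w
        = (((lam + 1) / 2 : ℝ) : ℂ) * ((s ^ (lam - 1) : ℝ) : ℂ) * w
          + (((lam - 1) / 2 : ℝ) : ℂ) * (((s ^ (lam - 3) : ℝ) : ℂ) * Z ^ 2)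
            * (starRingEnd ℂ) w := by
      rw [Complex.ofReal_mul, Complex.ofReal_mul, e1, e2, e3, e4]
      push_cast
      ring
    exact hval ▸ hmul

lemma Zc_bound {u₁ u₂ : ℂ} {τ : ℝ} (hτ : τ ∈ Set.Ioc (0:ℝ) 1) :
    ‖Zc u₁ u₂ τ‖ ≤ ‖u₁‖ + ‖u₂‖ := by
  have h1τ : ‖(τ:ℂ)‖ ≤ 1 := by
    rw [Complex.norm_real, Real.norm_eq_abs, abs_of_nonneg hτ.1.le]; exact hτ.2
  have h2τ : ‖1 - (τ:ℂ)‖ ≤ 1 := by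
    have he : ((1 - τ : ℝ) : ℂ) = 1 - (τ:ℂ) := by push_cast; ring
    rw [← he, Complex.norm_real, Real.norm_eq_abs, abs_of_nonneg (by linarith [hτ.2])]
    linarith [hτ.1]
  calc ‖Zc u₁ u₂ τ‖
      ≤ ‖(τ:ℂ) * u₁‖ + ‖(1 - (τ:ℂ)) * u₂‖ := norm_add_le _ _
    _ ≤ 1 * ‖u₁‖ + 1 * ‖u₂‖ := by
        rw [norm_mul, norm_mul]
        exact add_le_add (mul_le_mul_of_nonneg_right h1τ (norm_nonneg _))
          (mul_le_mul_of_nonneg_right h2τ (norm_nonneg _))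
    _ = ‖u₁‖ + ‖u₂‖ := by ring

lemma main2 (lam : ℝ) (hlam : 1 < lam) (u₁ u₂ : ℂ) :
    ((‖u₁‖ ^ (lam - 1) : ℝ) : ℂ) * u₁
        - ((‖u₂‖ ^ (lam - 1) : ℝ) : ℂ) * u₂ =
      (((lam + 1) / 2 : ℝ) : ℂ) *
          (∫ τ in (0:ℝ)..1, ((‖Zc u₁ u₂ τ‖ ^ (lam - 1) : ℝ) : ℂ)) * (u₁ - u₂)
        + (((lam - 1) / 2 : ℝ) : ℂ) *
          (∫ τ in (0:ℝ)..1,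
            ((‖Zc u₁ u₂ τ‖ ^ (lam - 3) : ℝ) : ℂ) * (Zc u₁ u₂ τ) ^ 2) *
          (starRingEnd ℂ) (u₁ - u₂) := by
  have hZcont : Continuous (Zc u₁ u₂) := by
    unfold Zc; fun_prop
  have habs : Measurable fun τ : ℝ => ‖Zc u₁ u₂ τ‖ :=
    (continuous_norm.comp hZcont).measurable
  have hΙ : Set.uIoc (0:ℝ) 1 = Set.Ioc 0 1 := uIoc_of_le (by norm_num)
  set M := ‖u₁‖ + ‖u₂‖ with hM
  have hMnn : 0 ≤ M := by positivity
  have hi1 : IntervalIntegrable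
      (fun τ : ℝ => ((‖Zc u₁ u₂ τ‖ ^ (lam - 1) : ℝ) : ℂ)) volume 0 1 := by
    rw [intervalIntegrable_iff, hΙ]
    apply Measure.integrableOn_of_bounded (M := M ^ (lam - 1)) measure_Ioc_lt_top.ne
      (Complex.measurable_ofReal.comp (habs.pow_const _)).aestronglyMeasurable
    filter_upwards [ae_restrict_mem measurableSet_Ioc] with τ hτ
    simp only [Function.comp_apply]
    rw [Complex.norm_real, Real.norm_eq_abs,
      abs_of_nonneg (Real.rpow_nonneg (norm_nonneg _) _)]
    exact Real.rpow_le_rpow (norm_nonneg _) (Zc_bound hτ) (by linarith)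
  have hi2 : IntervalIntegrable
      (fun τ : ℝ => ((‖Zc u₁ u₂ τ‖ ^ (lam - 3) : ℝ) : ℂ) * (Zc u₁ u₂ τ) ^ 2)
      volume 0 1 := by
    rw [intervalIntegrable_iff, hΙ]
    apply Measure.integrableOn_of_bounded (M := M ^ (lam - 1)) measure_Ioc_lt_top.ne
      ((Complex.measurable_ofReal.comp (habs.pow_const _)).mul
        (hZcont.measurable.pow_const 2)).aestronglyMeasurable
    filter_upwards [ae_restrict_mem measurableSet_Ioc] with τ hτ
    simp only [Pi.mul_apply, Function.comp_apply]
    rcases eq_or_ne (Zc u₁ u₂ τ) 0 with h0 | h0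
    · rw [h0]
      norm_num
      positivity
    · rw [norm_mul, Complex.norm_real, Real.norm_eq_abs,
        abs_of_nonneg (Real.rpow_nonneg (norm_nonneg _) _), norm_pow]
      have he : ‖Zc u₁ u₂ τ‖ ^ (lam - 3) * ‖Zc u₁ u₂ τ‖ ^ (2:ℕ)
          = ‖Zc u₁ u₂ τ‖ ^ (lam - 1) := by
        rw [← Real.rpow_natCast _ 2, ← Real.rpow_add (norm_pos_iff.mpr h0)]
        congr 1; push_cast; ring
      rw [he]
      exact Real.rpow_le_rpow (norm_nonneg _) (Zc_bound hτ) (by linarith)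
  have hDint := ((hi1.const_mul (((lam + 1) / 2 : ℝ) : ℂ)).mul_const (u₁ - u₂)).add
    ((hi2.const_mul (((lam - 1) / 2 : ℝ) : ℂ)).mul_const ((starRingEnd ℂ) (u₁ - u₂)))
  have hftc := intervalIntegral.integral_eq_sub_of_hasDerivAt
    (f := fun t : ℝ => ((‖Zc u₁ u₂ t‖ ^ (lam - 1) : ℝ) : ℂ) * Zc u₁ u₂ t)
    (fun t _ => keyDeriv lam hlam u₁ u₂ t) hDint
  rw [integral_add ((hi1.const_mul _).mul_const _) ((hi2.const_mul _).mul_const _),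
    intervalIntegral.integral_mul_const, intervalIntegral.integral_mul_const,
    intervalIntegral.integral_const_mul, intervalIntegral.integral_const_mul] at hftc
  have hZ1 : Zc u₁ u₂ 1 = u₁ := by simp [Zc]
  have hZz : Zc u₁ u₂ 0 = u₂ := by simp [Zc]
  simp only [hZ1, hZz] at hftc
  exact hftc.symm



/-- Mean value identity for the power nonlinearity: for `u₁, u₂ ∈ ℂ` and real `λ ≥ 1`,
`|u₁|^{λ−1}u₁ − |u₂|^{λ−1}u₂ = ((λ+1)/2)(∫₀¹ |Z_τ|^{λ−1} dτ)(u₁−u₂)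
  + ((λ−1)/2)(∫₀¹ |Z_τ|^{λ−3} Z_τ² dτ) conj(u₁−u₂)`, where `Z_τ = τu₁ + (1−τ)u₂`. -/
theorem stmt10 (lam : ℝ) (hlam : 1 ≤ lam) (u₁ u₂ : ℂ) :
    ((‖u₁‖ ^ (lam - 1) : ℝ) : ℂ) * u₁
        - ((‖u₂‖ ^ (lam - 1) : ℝ) : ℂ) * u₂ =
      (((lam + 1) / 2 : ℝ) : ℂ) *
          (∫ τ in (0 : ℝ)..1,
            ((‖(τ : ℂ) * u₁ + (1 - (τ : ℂ)) * u₂‖ ^ (lam - 1) : ℝ) : ℂ)) *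
          (u₁ - u₂)
        + (((lam - 1) / 2 : ℝ) : ℂ) *
          (∫ τ in (0 : ℝ)..1,
            ((‖(τ : ℂ) * u₁ + (1 - (τ : ℂ)) * u₂‖ ^ (lam - 3) : ℝ) : ℂ) *
              ((τ : ℂ) * u₁ + (1 - (τ : ℂ)) * u₂) ^ 2) *
          (starRingEnd ℂ) (u₁ - u₂) := by
  rcases eq_or_lt_of_le hlam with h1 | h1
  · subst h1
    norm_num [intervalIntegral.integral_const]
  · have h := main2 lam h1 u₁ u₂
    simpa only [Zc] using h
end

section
/- (Lower bound for Im(ν₀) in the closure of D₀ beyond the branch points) If k ∈ closure(D₀) and |k − α/(3β)| ≥ (2√2/(√3 β)) √|α² + 3βδ|, then Im(k) ≥ (√23/(4√2)) · |k − α/(3β)|. -/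
/-- Lower bound for `Im(ν₀) = Im k` on the closure of `D₀` beyond the branch points:
if `k ∈ closure D₀` and `|k − α/(3β)| ≥ (2√2/(√3 β))√|α² + 3βδ|`, then
`Im k ≥ (√23/(4√2)) |k − α/(3β)|`. -/
theorem stmt16 (β α δ : ℝ) (hβ : 0 < β) (k : ℂ)
    (hk : k ∈ closure {z : ℂ |
      ((β : ℂ) * z ^ 3 - (α : ℂ) * z ^ 2 - (δ : ℂ) * z).im < 0 ∧ 0 < z.im})
    (hfar : 2 * Real.sqrt 2 / (Real.sqrt 3 * β) * Real.sqrt |α ^ 2 + 3 * β * δ| ≤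
      ‖k - (α : ℂ) / (3 * (β : ℂ))‖) :
    Real.sqrt 23 / (4 * Real.sqrt 2) * ‖k - (α : ℂ) / (3 * (β : ℂ))‖ ≤
      k.im := by
  have hβ' : (β:ℝ) ≠ 0 := ne_of_gt hβ
  set c : ℝ := α / (3*β) with hc
  set p : ℝ := -(α^2 + 3*β*δ)/(3*β) with hp
  have hcast : ((α:ℂ)) / (3*(β:ℂ)) = (c:ℂ) := by
    push_cast [hc]; ring
  -- the key identity
  have him : ∀ z : ℂ, ((β : ℂ) * z ^ 3 - (α : ℂ) * z ^ 2 - (δ : ℂ) * z).im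
      = z.im * (3*β*((z.re - c)^2 + z.im^2) - 4*β*z.im^2 + p) := by
    intro z
    simp only [Complex.sub_im, Complex.mul_im, Complex.ofReal_re, Complex.ofReal_im,
      pow_succ, pow_zero, one_mul, Complex.mul_re, Complex.one_re, Complex.one_im]
    rw [hc, hp]
    field_simp [hc, hp]
    ring
  -- abs squared
  have habs : ∀ z : ℂ, ‖z - (c:ℂ)‖^2 = (z.re - c)^2 + z.im^2 := by
    intro z
    rw [Complex.sq_norm, Complex.normSq_apply]
    simp [Complex.sub_re, Complex.sub_im]
    ring
  -- the closed superset
  have hsub : k ∈ {z : ℂ | 3*β*‖z - (c:ℂ)‖^2 + p ≤ 4*β*z.im^2 ∧ 0 ≤ z.im} := by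
    refine closure_minimal ?_ ?_ hk
    · rintro z ⟨h1, h2⟩
      rw [him z] at h1
      rw [Set.mem_setOf_eq, habs z]
      constructor
      · nlinarith [h1, h2]
      · exact le_of_lt h2
    · rw [show {z : ℂ | 3*β*‖z - (c:ℂ)‖^2 + p ≤ 4*β*z.im^2 ∧ 0 ≤ z.im}
          = {z : ℂ | 3*β*‖z - (c:ℂ)‖^2 + p ≤ 4*β*z.im^2} ∩ {z : ℂ | 0 ≤ z.im}
          from rfl]
      refine IsClosed.inter (isClosed_le ?_ ?_) (isClosed_le continuous_const Complex.continuous_im)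
      · exact (continuous_const.mul ((continuous_norm.comp
          (continuous_id.sub continuous_const)).pow 2)).add continuous_const
      · exact continuous_const.mul (Complex.continuous_im.pow 2)
  obtain ⟨hkey, hy⟩ := hsub
  rw [hcast] at hfar ⊢
  set r := ‖k - (c:ℂ)‖ with hr
  have hr0 : 0 ≤ r := norm_nonneg _
  -- square hfar
  have hA : (0:ℝ) ≤ |α ^ 2 + 3 * β * δ| := abs_nonneg _
  have h2 : Real.sqrt 2 ^ 2 = 2 := Real.sq_sqrt (by norm_num)
  have h3 : Real.sqrt 3 ^ 2 = 3 := Real.sq_sqrt (by norm_num)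
  have h23 : Real.sqrt 23 ^ 2 = 23 := Real.sq_sqrt (by norm_num)
  have hAq : Real.sqrt |α ^ 2 + 3 * β * δ| ^ 2 = |α ^ 2 + 3 * β * δ| := Real.sq_sqrt hA
  have h2p : (0:ℝ) < Real.sqrt 2 := Real.sqrt_pos.mpr (by norm_num)
  have h3p : (0:ℝ) < Real.sqrt 3 := Real.sqrt_pos.mpr (by norm_num)
  have h23p : (0:ℝ) < Real.sqrt 23 := Real.sqrt_pos.mpr (by norm_num)
  have hRnn : 0 ≤ 2 * Real.sqrt 2 / (Real.sqrt 3 * β) * Real.sqrt |α ^ 2 + 3 * β * δ| := by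
    positivity
  have hsq : (2 * Real.sqrt 2 / (Real.sqrt 3 * β) * Real.sqrt |α ^ 2 + 3 * β * δ|)^2 ≤ r^2 :=
    pow_le_pow_left₀ hRnn hfar 2
  have hR2 : (2 * Real.sqrt 2 / (Real.sqrt 3 * β) * Real.sqrt |α ^ 2 + 3 * β * δ|)^2
      = 8 * |α ^ 2 + 3 * β * δ| / (3 * β^2) := by
    rw [mul_pow, div_pow, mul_pow, mul_pow, h2, h3, hAq]
    ring
  have hpabs : |p| = |α ^ 2 + 3 * β * δ| / (3*β) := by
    rw [hp, abs_div, abs_neg]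
    congr 1
    rw [abs_of_pos (by positivity)]
  have hbr : 8 * |p| ≤ β * r^2 := by
    rw [hpabs]
    rw [hR2] at hsq
    have := mul_le_mul_of_nonneg_left hsq (le_of_lt hβ)
    calc 8 * (|α ^ 2 + 3 * β * δ| / (3*β)) = β * (8 * |α ^ 2 + 3 * β * δ| / (3 * β^2)) := by
          field_simp
      _ ≤ β * r^2 := this
  -- conclude y^2 ≥ 23/32 r^2
  have hple : -|p| ≤ p := neg_abs_le p
  have hysq : (23/32) * r^2 ≤ k.im^2 := by nlinarith [hkey, hbr, hple]
  have hx0 : 0 ≤ Real.sqrt 23 / (4 * Real.sqrt 2) * r := by positivity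
  have hxsq : (Real.sqrt 23 / (4 * Real.sqrt 2) * r)^2 = (23/32) * r^2 := by
    rw [mul_pow, div_pow, mul_pow, h23, h2]
    norm_num
  calc Real.sqrt 23 / (4 * Real.sqrt 2) * r
      = Real.sqrt ((Real.sqrt 23 / (4 * Real.sqrt 2) * r)^2) := (Real.sqrt_sq hx0).symm
    _ ≤ Real.sqrt (k.im^2) := Real.sqrt_le_sqrt (by rw [hxsq]; linarith)
    _ = k.im := Real.sqrt_sq hy
end

section
/- (Exponential lower bound for the denominator Δ) There exists a constant c > 0 (depending on α, β, δ, ℓ) such that for every n ∈ {0, +, −} and every k in the closure of D_n with |k − α/(3β)| ≥ R_Δ, where R_Δ = max{ (2√2/(√3β))√|α²+3βδ|, 9/ℓ }, one has |e^{i ν_n ℓ} Δ(k)| ≥ c |k − α/(3β)|, where Δ(k) = (ν₊ − ν₋) e^{−i k ℓ} + (ν₋ − k) e^{−i ν₊ ℓ} + (k − ν₊) e^{−i ν₋ ℓ}. -/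
/-- The denominator `Δ(k)` of the unified transform solution formula. -/
noncomputable def DeltaFun (β α ℓ : ℝ) (k w : ℂ) : ℂ :=
  (nuPlus β α k w - nuMinus β α k w) * Complex.exp (-Complex.I * k * (ℓ : ℂ))
    + (nuMinus β α k w - k) * Complex.exp (-Complex.I * nuPlus β α k w * (ℓ : ℂ))
    + (k - nuPlus β α k w) * Complex.exp (-Complex.I * nuMinus β α k w * (ℓ : ℂ))

/-- The region `D₀`. -/
def D0 (β α δ : ℝ) : Set ℂ := {k : ℂ | (omegaC β α δ k).im < 0 ∧ 0 < k.im}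

/-- The region `D₊`. -/
def Dp (β α δ : ℝ) : Set ℂ :=
  {k : ℂ | (omegaC β α δ k).im < 0 ∧ k.im < 0 ∧ 0 < (k - (α : ℂ) / (3 * (β : ℂ))).re}

/-- The region `D₋`. -/
def Dm (β α δ : ℝ) : Set ℂ :=
  {k : ℂ | (omegaC β α δ k).im < 0 ∧ k.im < 0 ∧ (k - (α : ℂ) / (3 * (β : ℂ))).re < 0}


lemma sqrt3_lb : (17/10:ℝ) ≤ Real.sqrt 3 := by
  nlinarith [Real.sq_sqrt (by norm_num : (0:ℝ) ≤ 3), Real.sqrt_nonneg 3]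

lemma sqrt3_ub : Real.sqrt 3 ≤ (9/5:ℝ) := by
  nlinarith [Real.sq_sqrt (by norm_num : (0:ℝ) ≤ 3), Real.sqrt_nonneg 3]

lemma r_hA (β A s : ℝ) (hβ : 0 < β)
    (h1 : 2*Real.sqrt 2/(Real.sqrt 3*β)*Real.sqrt |A| ≤ s) : |A| ≤ 3*β^2*s^2/8 := by
  have hr3β : (0:ℝ) < Real.sqrt 3 * β := by
    have := sqrt3_lb; nlinarith
  have h1' : 2*Real.sqrt 2*Real.sqrt |A| ≤ s*(Real.sqrt 3*β) := by
    rw [div_mul_eq_mul_div, div_le_iff₀ hr3β] at h1; linarith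
  have hsq : (2*Real.sqrt 2*Real.sqrt |A|)^2 ≤ (s*(Real.sqrt 3*β))^2 :=
    pow_le_pow_left₀ (by positivity) h1' 2
  have e1 : (2*Real.sqrt 2*Real.sqrt |A|)^2 = 8*|A| := by
    rw [mul_pow, mul_pow, Real.sq_sqrt (by norm_num : (0:ℝ) ≤ 2),
      Real.sq_sqrt (abs_nonneg _)]
    ring
  have e2 : (s*(Real.sqrt 3*β))^2 = 3*s^2*β^2 := by
    rw [mul_pow, mul_pow, Real.sq_sqrt (by norm_num : (0:ℝ) ≤ 3)]; ring
  rw [e1, e2] at hsq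
  nlinarith

lemma r_eps (d b s : ℝ) (hd : 0 ≤ d) (hb : 4/3*s ≤ b) (hm : d*b ≤ s^2/6)
    (hs : 0 < s) : d ≤ s/8 := by
  nlinarith [mul_le_mul_of_nonneg_left hb hd]

lemma r_sum (nw b r s : ℝ) (aw2 : 5/6*s^2 ≤ nw) (h1 : b^2 = nw + s^2 + 2*r)
    (hr : 0 ≤ r) (hb : 0 ≤ b) (hs : 0 < s) : 4/3*s ≤ b := by
  nlinarith

lemma r_ylb (s y : ℝ) (hy0 : 0 ≤ y) (h : 23/32*s^2 ≤ y^2) (hs : 0 < s) : 4/5*s ≤ y := by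
  nlinarith

lemma r_xabs (s x y : ℝ) (hs2 : x^2 + y^2 = s^2) (h : 23/32*s^2 ≤ y^2) (hs : 0 < s) :
    |x| ≤ 3/5*s := by
  rw [abs_le]; constructor <;> nlinarith

lemma r_tu0 (u s : ℝ) (hu : |u| ≤ 29/40*s) : |Real.sqrt 3/2*u| ≤ 9/10*(29/40*s) := by
  have h1 := sqrt3_ub
  have h0 := Real.sqrt_nonneg 3
  have h2 : (0:ℝ) ≤ |u| := abs_nonneg u
  rw [abs_mul, abs_of_nonneg (by positivity : (0:ℝ) ≤ Real.sqrt 3/2)]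
  nlinarith

lemma r_xp (s x y : ℝ) (hs2 : x^2+y^2 = s^2) (hy2 : y^2 ≤ 25/32*s^2) (hx0 : 0 ≤ x)
    (hs : 0 < s) : 9/20*s ≤ x := by
  nlinarith

lemma r_tup (u s : ℝ) (hu : 13/40*s ≤ u) (hs : 0 < s) :
    17/20*(13/40*s) ≤ Real.sqrt 3/2*u ∧ s/4 ≤ Real.sqrt 3*u := by
  have h1 := sqrt3_lb
  have h0 := Real.sqrt_nonneg 3
  constructor <;> nlinarith

lemma r_coef (aw s : ℝ) (h7 : 7/8*s ≤ aw) (h9 : aw ≤ 9/8*s) (hs : 0 < s) :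
    29/20*s ≤ Real.sqrt 3*aw ∧ Real.sqrt 3*aw ≤ 21/10*s := by
  have h1 := sqrt3_lb
  have h2 := sqrt3_ub
  constructor <;> nlinarith

lemma r_cm_lb (A H s : ℝ) (h1 : Real.sqrt 3*s ≤ A + H) (hH : H ≤ Real.sqrt 3/2*(s/8))
    (hs : 0 < s) : 29/20*s ≤ A := by
  have l := sqrt3_lb
  nlinarith

lemma r_cm_ub (A H s : ℝ) (h1 : A ≤ Real.sqrt 3*s + H) (hH : H ≤ Real.sqrt 3/2*(s/8))
    (hs : 0 < s) : A ≤ 21/10*s := by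
  have u := sqrt3_ub
  have l := sqrt3_lb
  nlinarith

lemma im_omega (β α δ : ℝ) (hβ' : (β:ℂ) ≠ 0) (k : ℂ) :
    (omegaC β α δ k).im = k.im * (β*(3*(norm (k - (α:ℂ)/(3*(β:ℂ))))^2 - 4*k.im^2)
      - (α^2+3*β*δ)/(3*β)) := by
  have hid : omegaC β α δ k = ((β:ℝ):ℂ)*(k - (α:ℂ)/(3*(β:ℂ)))^3
      + ((-(α^2+3*β*δ)/(3*β) : ℝ):ℂ)*(k - (α:ℂ)/(3*(β:ℂ)))
      + (((-(2*α^3)/(27*β^2) - δ*α/(3*β)) : ℝ):ℂ) := by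
    unfold omegaC
    push_cast
    field_simp
    ring
  have hζim : ((k - (α:ℂ)/(3*(β:ℂ)))).im = k.im := by
    rw [show (α:ℂ)/(3*(β:ℂ)) = ((α/(3*β):ℝ):ℂ) by push_cast; ring]
    simp only [Complex.sub_im, Complex.ofReal_im, sub_zero]
  have h3 : (((k - (α:ℂ)/(3*(β:ℂ))))^3).im = 3*((k - (α:ℂ)/(3*(β:ℂ)))).re^2*((k - (α:ℂ)/(3*(β:ℂ)))).im - ((k - (α:ℂ)/(3*(β:ℂ)))).im^3 := by
    rw [show ((k - (α:ℂ)/(3*(β:ℂ))))^3 = ((k - (α:ℂ)/(3*(β:ℂ))))*((k - (α:ℂ)/(3*(β:ℂ))))*((k - (α:ℂ)/(3*(β:ℂ)))) by ring]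
    simp only [Complex.mul_im, Complex.mul_re]
    ring
  have habs : (norm (k - (α:ℂ)/(3*(β:ℂ))))^2 = ((k - (α:ℂ)/(3*(β:ℂ)))).re^2 + ((k - (α:ℂ)/(3*(β:ℂ)))).im^2 := by
    rw [Complex.sq_norm, Complex.normSq_apply]; ring
  rw [hid]
  simp only [Complex.add_im, Complex.mul_im, Complex.ofReal_re, Complex.ofReal_im, h3]
  rw [habs, ← hζim]
  ring

lemma abs_add3_lower (a b c : ℂ) :
    norm a - norm b - norm c ≤ norm (a + b + c) := by
  have h1 := norm_add_le (a + b + c) (-b + -c)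
  have h2 := norm_add_le (-b) (-c)
  rw [show a + b + c + (-b + -c) = a by ring] at h1
  rw [norm_neg b, norm_neg c] at h2
  linarith

lemma cross_bound (c z : ℂ) (s : ℝ) (hs : 0 ≤ s)
    (hc : norm c ≤ 21/10*s) (hz : z.re ≤ -(9/4)) :
    norm (c * Complex.exp z) ≤ 2/5*s := by
  rw [norm_mul, Complex.norm_exp]
  have h1 : Real.exp z.re ≤ Real.exp (-(9/4)) := Real.exp_le_exp.mpr hz
  have h3 : Real.exp (-(3/4):ℝ) ≤ 4/7 := by
    rw [Real.exp_neg]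
    have h4 : (7/4:ℝ) ≤ Real.exp (3/4) := by
      have := Real.add_one_le_exp (3/4:ℝ); linarith
    have h5 := inv_anti₀ (by norm_num : (0:ℝ) < 7/4) h4
    norm_num at h5
    linarith
  have h2 : Real.exp (-(9/4):ℝ) ≤ 64/343 := by
    rw [show (-(9/4):ℝ) = -(3/4) + -(3/4) + -(3/4) by norm_num, Real.exp_add, Real.exp_add]
    have hp := Real.exp_pos (-(3/4):ℝ)
    nlinarith [h3, hp]
  calc norm c * Real.exp z.re ≤ (21/10*s) * (64/343) :=
        mul_le_mul hc (h1.trans h2) (le_of_lt (Real.exp_pos _)) (by positivity)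
    _ ≤ 2/5*s := by nlinarith

lemma main_est (ℓ s : ℝ) (hℓ : 0 < ℓ) (hs : 0 < s) (hsl : 9 ≤ s*ℓ)
    (main c1 c2 g1 g2 : ℂ)
    (hmain : 29/20*s ≤ norm main)
    (h1 : norm c1 ≤ 21/10*s) (h2 : norm c2 ≤ 21/10*s)
    (hg1 : s/4 ≤ g1.im) (hg2 : s/4 ≤ g2.im) :
    1/2*s ≤ norm (main + c1*Complex.exp (Complex.I*g1*(ℓ:ℂ))
      + c2*Complex.exp (Complex.I*g2*(ℓ:ℂ))) := by
  have hre : ∀ g : ℂ, s/4 ≤ g.im → (Complex.I*g*(ℓ:ℂ)).re ≤ -(9/4) := by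
    intro g hg
    have : (Complex.I*g*(ℓ:ℂ)).re = -g.im * ℓ := by
      simp [Complex.mul_re, Complex.mul_im]
    rw [this]
    have h4 : s/4*ℓ ≤ g.im*ℓ := mul_le_mul_of_nonneg_right hg (le_of_lt hℓ)
    linarith
  have hb1 := cross_bound c1 _ s (le_of_lt hs) h1 (hre g1 hg1)
  have hb2 := cross_bound c2 _ s (le_of_lt hs) h2 (hre g2 hg2)
  have htr := abs_add3_lower main (c1*Complex.exp (Complex.I*g1*(ℓ:ℂ)))
    (c2*Complex.exp (Complex.I*g2*(ℓ:ℂ)))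
  linarith

lemma clD0_subset (β α δ : ℝ) (hβ : 0 < β) :
    closure (D0 β α δ) ⊆ {k : ℂ | 0 ≤ k.im ∧
      β*(3*(norm (k - (α:ℂ)/(3*(β:ℂ))))^2 - 4*k.im^2) - (α^2+3*β*δ)/(3*β) ≤ 0} := by
  apply closure_minimal
  · rintro k ⟨h1, h2⟩
    rw [im_omega β α δ (by exact_mod_cast hβ.ne') k] at h1
    refine ⟨le_of_lt h2, ?_⟩
    rcases mul_neg_iff.mp h1 with ⟨-, hE⟩ | ⟨hneg, -⟩
    · exact le_of_lt hE
    · linarith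
  · apply IsClosed.inter
    · exact isClosed_le continuous_const Complex.continuous_im
    · have hcont : Continuous (fun k : ℂ => β*(3*(norm (k - (α:ℂ)/(3*(β:ℂ))))^2 - 4*k.im^2) - (α^2+3*β*δ)/(3*β)) := by
        apply Continuous.sub _ continuous_const
        apply Continuous.mul continuous_const
        apply Continuous.sub
        · exact continuous_const.mul
            ((continuous_norm.comp (continuous_id.sub continuous_const)).pow 2)
        · exact continuous_const.mul (Complex.continuous_im.pow 2)
      exact isClosed_le hcont continuous_const

lemma clDp_subset (β α δ : ℝ) (hβ : 0 < β) :
    closure (Dp β α δ) ⊆ {k : ℂ | k.im ≤ 0 ∧ 0 ≤ ((k - (α:ℂ)/(3*(β:ℂ)))).re ∧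
      0 ≤ β*(3*(norm (k - (α:ℂ)/(3*(β:ℂ))))^2 - 4*k.im^2) - (α^2+3*β*δ)/(3*β)} := by
  apply closure_minimal
  · rintro k ⟨h1, h2, h3⟩
    rw [im_omega β α δ (by exact_mod_cast hβ.ne') k] at h1
    refine ⟨le_of_lt h2, le_of_lt h3, ?_⟩
    rcases mul_neg_iff.mp h1 with ⟨hpos, -⟩ | ⟨-, hE⟩
    · linarith
    · exact le_of_lt hE
  · refine IsClosed.inter (isClosed_le Complex.continuous_im continuous_const)
      (IsClosed.inter ?_ ?_)
    · exact isClosed_le continuous_const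
        (Complex.continuous_re.comp (continuous_id.sub continuous_const))
    · have hcont : Continuous (fun k : ℂ => β*(3*(norm (k - (α:ℂ)/(3*(β:ℂ))))^2 - 4*k.im^2) - (α^2+3*β*δ)/(3*β)) := by
        apply Continuous.sub _ continuous_const
        apply Continuous.mul continuous_const
        apply Continuous.sub
        · exact continuous_const.mul
            ((continuous_norm.comp (continuous_id.sub continuous_const)).pow 2)
        · exact continuous_const.mul (Complex.continuous_im.pow 2)
      exact isClosed_le continuous_const hcont

lemma clDm_subset (β α δ : ℝ) (hβ : 0 < β) :
    closure (Dm β α δ) ⊆ {k : ℂ | k.im ≤ 0 ∧ ((k - (α:ℂ)/(3*(β:ℂ)))).re ≤ 0 ∧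
      0 ≤ β*(3*(norm (k - (α:ℂ)/(3*(β:ℂ))))^2 - 4*k.im^2) - (α^2+3*β*δ)/(3*β)} := by
  apply closure_minimal
  · rintro k ⟨h1, h2, h3⟩
    rw [im_omega β α δ (by exact_mod_cast hβ.ne') k] at h1
    refine ⟨le_of_lt h2, le_of_lt h3, ?_⟩
    rcases mul_neg_iff.mp h1 with ⟨hpos, -⟩ | ⟨-, hE⟩
    · linarith
    · exact le_of_lt hE
  · refine IsClosed.inter (isClosed_le Complex.continuous_im continuous_const)
      (IsClosed.inter ?_ ?_)
    · exact isClosed_le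
        (Complex.continuous_re.comp (continuous_id.sub continuous_const)) continuous_const
    · have hcont : Continuous (fun k : ℂ => β*(3*(norm (k - (α:ℂ)/(3*(β:ℂ))))^2 - 4*k.im^2) - (α^2+3*β*δ)/(3*β)) := by
        apply Continuous.sub _ continuous_const
        apply Continuous.mul continuous_const
        apply Continuous.sub
        · exact continuous_const.mul
            ((continuous_norm.comp (continuous_id.sub continuous_const)).pow 2)
        · exact continuous_const.mul (Complex.continuous_im.pow 2)
      exact isClosed_le continuous_const hcont

set_option maxHeartbeats 3000000 in
/-- Exponential lower bound for the denominator `Δ`: there is `c > 0` (depending on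
`α, β, δ, ℓ`) such that for each `n ∈ {0, +, −}` and each `k` in the closure of `D_n` with
`|k − α/(3β)| ≥ R_Δ := max{(2√2/(√3β))√|α²+3βδ|, 9/ℓ}`, one has
`|e^{i ν_n ℓ} Δ(k)| ≥ c |k − α/(3β)|`. -/
theorem stmt18 (β α δ ℓ : ℝ) (hβ : 0 < β) (hℓ : 0 < ℓ) :
    ∃ c : ℝ, 0 < c ∧ ∀ k w : ℂ,
      w ^ 2 = (k - (α : ℂ) / (3 * (β : ℂ))) ^ 2
          - (4 / (9 * (β : ℂ) ^ 2)) * ((α : ℂ) ^ 2 + 3 * (β : ℂ) * (δ : ℂ)) →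
      0 ≤ (w * (starRingEnd ℂ) (k - (α : ℂ) / (3 * (β : ℂ)))).re →
      max (2 * Real.sqrt 2 / (Real.sqrt 3 * β) * Real.sqrt |α ^ 2 + 3 * β * δ|) (9 / ℓ) ≤
        norm (k - (α : ℂ) / (3 * (β : ℂ))) →
      ((k ∈ closure (D0 β α δ) →
        c * norm (k - (α : ℂ) / (3 * (β : ℂ))) ≤
          norm (Complex.exp (Complex.I * k * (ℓ : ℂ)) * DeltaFun β α ℓ k w)) ∧
       (k ∈ closure (Dp β α δ) →
        c * norm (k - (α : ℂ) / (3 * (β : ℂ))) ≤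
          norm (Complex.exp (Complex.I * nuPlus β α k w * (ℓ : ℂ))
            * DeltaFun β α ℓ k w)) ∧
       (k ∈ closure (Dm β α δ) →
        c * norm (k - (α : ℂ) / (3 * (β : ℂ))) ≤
          norm (Complex.exp (Complex.I * nuMinus β α k w * (ℓ : ℂ))
            * DeltaFun β α ℓ k w))) := by
  have hβ' : (β:ℂ) ≠ 0 := by exact_mod_cast hβ.ne'
  refine ⟨1/2, by norm_num, ?_⟩
  intro k w hw hbr hR
  -- notation
  have ht2 : (Real.sqrt 3)^2 = 3 := Real.sq_sqrt (by norm_num)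
  have ht0 : (0:ℝ) ≤ Real.sqrt 3 := Real.sqrt_nonneg 3
  have ht_lb : (17/10:ℝ) ≤ Real.sqrt 3 := sqrt3_lb
  have ht_ub : Real.sqrt 3 ≤ (9/5:ℝ) := sqrt3_ub
  -- size of s
  have hs9 : 9/ℓ ≤ (norm (k - (α:ℂ)/(3*(β:ℂ)))) := le_trans (le_max_right _ _) hR
  have hs_pos : 0 < (norm (k - (α:ℂ)/(3*(β:ℂ)))) := lt_of_lt_of_le (by positivity) hs9
  have hsl : 9 ≤ (norm (k - (α:ℂ)/(3*(β:ℂ)))) * ℓ := by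
    rw [div_le_iff₀ hℓ] at hs9; linarith
  -- |α²+3βδ| ≤ 3β²s²/8
  have hA : |α^2+3*β*δ| ≤ 3*β^2*(norm (k - (α:ℂ)/(3*(β:ℂ))))^2/8 :=
    r_hA β _ _ hβ (le_trans (le_max_left _ _) hR)
  -- |w - ζ| ≤ s/8
  have hmC : (4/(9*(β:ℂ)^2))*((α:ℂ)^2+3*(β:ℂ)*(δ:ℂ))
      = (((4*(α^2+3*β*δ)/(9*β^2)):ℝ):ℂ) := by push_cast; ring
  have hmabs : norm ((4/(9*(β:ℂ)^2))*((α:ℂ)^2+3*(β:ℂ)*(δ:ℂ)))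
      = 4*|α^2+3*β*δ|/(9*β^2) := by
    rw [hmC, Complex.norm_real, Real.norm_eq_abs, abs_div, abs_mul]
    rw [abs_of_pos (by positivity : (0:ℝ) < 9*β^2)]
    norm_num
  have hm_le : norm ((4/(9*(β:ℂ)^2))*((α:ℂ)^2+3*(β:ℂ)*(δ:ℂ))) ≤ (norm (k - (α:ℂ)/(3*(β:ℂ))))^2/6 := by
    rw [hmabs, div_le_div_iff₀ (by positivity) (by norm_num)]
    linarith [hA]
  have hwa2 : (5/6)*(norm (k - (α:ℂ)/(3*(β:ℂ))))^2 ≤ (norm w)^2 := by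
    have hpow : (norm w)^2 = norm (w^2) := (norm_pow w 2).symm
    have htr := norm_add_le ((k - (α:ℂ)/(3*(β:ℂ)))^2 - (4/(9*(β:ℂ)^2))*((α:ℂ)^2+3*(β:ℂ)*(δ:ℂ)))
      ((4/(9*(β:ℂ)^2))*((α:ℂ)^2+3*(β:ℂ)*(δ:ℂ)))
    rw [sub_add_cancel] at htr
    rw [norm_pow] at htr
    rw [hpow, hw]
    linarith [hm_le, htr]
  have hsum : (4/3)*(norm (k - (α:ℂ)/(3*(β:ℂ)))) ≤ norm (w + (k - (α:ℂ)/(3*(β:ℂ)))) := by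
    have h1 : (norm (w + (k - (α:ℂ)/(3*(β:ℂ)))))^2 = Complex.normSq w + Complex.normSq (k - (α:ℂ)/(3*(β:ℂ)))
        + 2*(w * (starRingEnd ℂ) (k - (α:ℂ)/(3*(β:ℂ)))).re := by
      rw [Complex.sq_norm]; exact Complex.normSq_add w (k - (α:ℂ)/(3*(β:ℂ)))
    have h2 : Complex.normSq w = (norm w)^2 := (Complex.sq_norm w).symm
    have h3 : Complex.normSq (k - (α:ℂ)/(3*(β:ℂ))) = (norm (k - (α:ℂ)/(3*(β:ℂ))))^2 := (Complex.sq_norm (k - (α:ℂ)/(3*(β:ℂ)))).symm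
    refine r_sum (Complex.normSq w) _ ((w * (starRingEnd ℂ) (k - (α:ℂ)/(3*(β:ℂ)))).re) _
      (by rw [h2]; exact hwa2) (by rw [h1, h3]) hbr (norm_nonneg _) hs_pos
  have heps : norm (w - (k - (α:ℂ)/(3*(β:ℂ)))) ≤ (norm (k - (α:ℂ)/(3*(β:ℂ))))/8 := by
    have hp : norm (w - (k - (α:ℂ)/(3*(β:ℂ)))) * norm (w + (k - (α:ℂ)/(3*(β:ℂ))))
        = norm ((4/(9*(β:ℂ)^2))*((α:ℂ)^2+3*(β:ℂ)*(δ:ℂ))) := by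
      rw [← norm_mul, show (w - (k - (α:ℂ)/(3*(β:ℂ))))*(w + (k - (α:ℂ)/(3*(β:ℂ))))
        = -((4/(9*(β:ℂ)^2))*((α:ℂ)^2+3*(β:ℂ)*(δ:ℂ))) by linear_combination hw,
        norm_neg]
    exact r_eps _ _ _ (norm_nonneg _) hsum (by rw [hp]; exact hm_le) hs_pos
  -- real part of w close to x
  have hux : |w.re - ((k - (α:ℂ)/(3*(β:ℂ)))).re| ≤ (norm (k - (α:ℂ)/(3*(β:ℂ))))/8 := by
    have h1 : (w - (k - (α:ℂ)/(3*(β:ℂ)))).re = w.re - ((k - (α:ℂ)/(3*(β:ℂ)))).re := by simp [Complex.sub_re]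
    have h2 := Complex.abs_re_le_norm (w - (k - (α:ℂ)/(3*(β:ℂ))))
    rw [h1] at h2
    exact le_trans h2 heps
  have hu1 : w.re ≤ ((k - (α:ℂ)/(3*(β:ℂ)))).re + (norm (k - (α:ℂ)/(3*(β:ℂ))))/8 := by
    have := (abs_le.mp hux).2; linarith
  have hu2 : ((k - (α:ℂ)/(3*(β:ℂ)))).re - (norm (k - (α:ℂ)/(3*(β:ℂ))))/8 ≤ w.re := by
    have := (abs_le.mp hux).1; linarith
  -- |w| bounds
  have hwu : norm w ≤ (9/8)*(norm (k - (α:ℂ)/(3*(β:ℂ)))) := by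
    have h1 := norm_add_le (w - (k - (α:ℂ)/(3*(β:ℂ)))) (k - (α:ℂ)/(3*(β:ℂ)))
    rw [sub_add_cancel] at h1
    linarith
  have hwl : (7/8)*(norm (k - (α:ℂ)/(3*(β:ℂ)))) ≤ norm w := by
    have h1 := norm_add_le ((k - (α:ℂ)/(3*(β:ℂ))) - w) w
    rw [sub_add_cancel] at h1
    rw [show (k - (α:ℂ)/(3*(β:ℂ))) - w = -(w - (k - (α:ℂ)/(3*(β:ℂ)))) by ring,
      norm_neg] at h1
    linarith
  -- imaginary parts of the symmetries
  have hζim : ((k - (α:ℂ)/(3*(β:ℂ)))).im = k.im := by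
    rw [show (α:ℂ)/(3*(β:ℂ)) = ((α/(3*β):ℝ):ℂ) by push_cast; ring]
    simp only [Complex.sub_im, Complex.ofReal_im, sub_zero]
  have hs2 : ((k - (α:ℂ)/(3*(β:ℂ)))).re^2 + k.im^2 = (norm (k - (α:ℂ)/(3*(β:ℂ))))^2 := by
    rw [← hζim, Complex.sq_norm, Complex.normSq_apply]; ring
  have hνpid : (nuPlus β α k w) = ((-(1/2):ℝ):ℂ) * (k - ((α/β : ℝ):ℂ))
      + (((Real.sqrt 3/2):ℝ):ℂ) * Complex.I * w := by
    unfold nuPlus; push_cast; ring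
  have hνmid : (nuMinus β α k w) = ((-(1/2):ℝ):ℂ) * (k - ((α/β : ℝ):ℂ))
      - (((Real.sqrt 3/2):ℝ):ℂ) * Complex.I * w := by
    unfold nuMinus; push_cast; ring
  have hνp_im : ((nuPlus β α k w)).im = -(1/2)*k.im + Real.sqrt 3/2*w.re := by
    rw [hνpid]
    simp only [Complex.add_im, Complex.mul_im, Complex.mul_re, Complex.sub_im,
      Complex.sub_re, Complex.ofReal_re, Complex.ofReal_im, Complex.I_re, Complex.I_im]
    ring
  have hνm_im : ((nuMinus β α k w)).im = -(1/2)*k.im - Real.sqrt 3/2*w.re := by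
    rw [hνmid]
    simp only [Complex.sub_im, Complex.mul_im, Complex.mul_re,
      Complex.sub_re, Complex.ofReal_re, Complex.ofReal_im, Complex.I_re, Complex.I_im]
    ring
  -- coefficient identities
  have hc0 : (nuPlus β α k w) - (nuMinus β α k w) = ((Real.sqrt 3:ℝ):ℂ)*Complex.I*w := by
    unfold nuPlus nuMinus; push_cast; ring
  have hcmid : k - (nuPlus β α k w) = ((3:ℂ)/2 - ((Real.sqrt 3:ℝ):ℂ)/2*Complex.I)*(k - (α:ℂ)/(3*(β:ℂ)))
      - ((Real.sqrt 3:ℝ):ℂ)/2*Complex.I*(w - (k - (α:ℂ)/(3*(β:ℂ)))) := by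
    unfold nuPlus
    push_cast
    field_simp
    ring
  have hcpid : (nuMinus β α k w) - k = (-(3:ℂ)/2 - ((Real.sqrt 3:ℝ):ℂ)/2*Complex.I)*(k - (α:ℂ)/(3*(β:ℂ)))
      - ((Real.sqrt 3:ℝ):ℂ)/2*Complex.I*(w - (k - (α:ℂ)/(3*(β:ℂ)))) := by
    unfold nuMinus
    push_cast
    field_simp
    ring
  have habs_fac1 : norm ((3:ℂ)/2 - ((Real.sqrt 3:ℝ):ℂ)/2*Complex.I) = Real.sqrt 3 := by
    rw [show (3:ℂ)/2 - ((Real.sqrt 3:ℝ):ℂ)/2*Complex.I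
      = ((3/2:ℝ):ℂ) + ((-(Real.sqrt 3/2):ℝ):ℂ)*Complex.I by push_cast; ring]
    rw [Complex.norm_add_mul_I]
    rw [show (3/2:ℝ)^2 + (-(Real.sqrt 3/2))^2 = 3 by nlinarith]
  have habs_fac2 : norm (-(3:ℂ)/2 - ((Real.sqrt 3:ℝ):ℂ)/2*Complex.I) = Real.sqrt 3 := by
    rw [show -(3:ℂ)/2 - ((Real.sqrt 3:ℝ):ℂ)/2*Complex.I
      = ((-(3/2):ℝ):ℂ) + ((-(Real.sqrt 3/2):ℝ):ℂ)*Complex.I by push_cast; ring]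
    rw [Complex.norm_add_mul_I]
    rw [show (-(3/2):ℝ)^2 + (-(Real.sqrt 3/2))^2 = 3 by nlinarith]
  have habs_half : norm (((Real.sqrt 3:ℝ):ℂ)/2*Complex.I*(w - (k - (α:ℂ)/(3*(β:ℂ)))))
      ≤ Real.sqrt 3/2*((norm (k - (α:ℂ)/(3*(β:ℂ))))/8) := by
    rw [norm_mul, norm_mul, norm_div, Complex.norm_real, Real.norm_eq_abs, Complex.norm_I, mul_one,
      abs_of_nonneg ht0, Complex.norm_two]
    exact mul_le_mul_of_nonneg_left heps (by positivity)
  -- |ν₊ - ν₋|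
  have hc0_abs : norm ((nuPlus β α k w) - (nuMinus β α k w)) = Real.sqrt 3 * norm w := by
    rw [hc0, norm_mul, norm_mul, Complex.norm_real, Real.norm_eq_abs, Complex.norm_I, mul_one,
      abs_of_nonneg ht0]
  have hc0_lb : 29/20*(norm (k - (α:ℂ)/(3*(β:ℂ)))) ≤ norm ((nuPlus β α k w) - (nuMinus β α k w)) := by
    rw [hc0_abs]; exact (r_coef _ _ hwl hwu hs_pos).1
  have hc0_ub : norm ((nuPlus β α k w) - (nuMinus β α k w)) ≤ 21/10*(norm (k - (α:ℂ)/(3*(β:ℂ)))) := by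
    rw [hc0_abs]; exact (r_coef _ _ hwl hwu hs_pos).2
  -- |k - ν₊| bounds
  have hcm_main : norm (((3:ℂ)/2 - ((Real.sqrt 3:ℝ):ℂ)/2*Complex.I)*(k - (α:ℂ)/(3*(β:ℂ))))
      = Real.sqrt 3 * (norm (k - (α:ℂ)/(3*(β:ℂ)))) := by
    rw [norm_mul, habs_fac1]
  have hcm_lb : 29/20*(norm (k - (α:ℂ)/(3*(β:ℂ)))) ≤ norm (k - (nuPlus β α k w)) := by
    have h1 := norm_add_le (k - (nuPlus β α k w))
      (((Real.sqrt 3:ℝ):ℂ)/2*Complex.I*(w - (k - (α:ℂ)/(3*(β:ℂ)))))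
    rw [show k - (nuPlus β α k w) + ((Real.sqrt 3:ℝ):ℂ)/2*Complex.I*(w - (k - (α:ℂ)/(3*(β:ℂ))))
      = ((3:ℂ)/2 - ((Real.sqrt 3:ℝ):ℂ)/2*Complex.I)*(k - (α:ℂ)/(3*(β:ℂ))) by linear_combination hcmid] at h1
    rw [hcm_main] at h1
    exact r_cm_lb _ _ _ h1 habs_half hs_pos
  have hcm_ub : norm (k - (nuPlus β α k w)) ≤ 21/10*(norm (k - (α:ℂ)/(3*(β:ℂ)))) := by
    rw [hcmid, sub_eq_add_neg]
    have h1 := norm_add_le (((3:ℂ)/2 - ((Real.sqrt 3:ℝ):ℂ)/2*Complex.I)*(k - (α:ℂ)/(3*(β:ℂ))))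
      (-(((Real.sqrt 3:ℝ):ℂ)/2*Complex.I*(w - (k - (α:ℂ)/(3*(β:ℂ))))))
    rw [norm_neg, hcm_main] at h1
    exact r_cm_ub _ _ _ h1 habs_half hs_pos
  have hcp_main : norm ((-(3:ℂ)/2 - ((Real.sqrt 3:ℝ):ℂ)/2*Complex.I)*(k - (α:ℂ)/(3*(β:ℂ))))
      = Real.sqrt 3 * (norm (k - (α:ℂ)/(3*(β:ℂ)))) := by
    rw [norm_mul, habs_fac2]
  have hcp_lb : 29/20*(norm (k - (α:ℂ)/(3*(β:ℂ)))) ≤ norm ((nuMinus β α k w) - k) := by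
    have h1 := norm_add_le ((nuMinus β α k w) - k)
      (((Real.sqrt 3:ℝ):ℂ)/2*Complex.I*(w - (k - (α:ℂ)/(3*(β:ℂ)))))
    rw [show (nuMinus β α k w) - k + ((Real.sqrt 3:ℝ):ℂ)/2*Complex.I*(w - (k - (α:ℂ)/(3*(β:ℂ))))
      = (-(3:ℂ)/2 - ((Real.sqrt 3:ℝ):ℂ)/2*Complex.I)*(k - (α:ℂ)/(3*(β:ℂ))) by linear_combination hcpid] at h1
    rw [hcp_main] at h1
    exact r_cm_lb _ _ _ h1 habs_half hs_pos
  have hcp_ub : norm ((nuMinus β α k w) - k) ≤ 21/10*(norm (k - (α:ℂ)/(3*(β:ℂ)))) := by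
    rw [hcpid, sub_eq_add_neg]
    have h1 := norm_add_le ((-(3:ℂ)/2 - ((Real.sqrt 3:ℝ):ℂ)/2*Complex.I)*(k - (α:ℂ)/(3*(β:ℂ))))
      (-(((Real.sqrt 3:ℝ):ℂ)/2*Complex.I*(w - (k - (α:ℂ)/(3*(β:ℂ))))))
    rw [norm_neg, hcp_main] at h1
    exact r_cm_ub _ _ _ h1 habs_half hs_pos
  -- bound on the real constant (α²+3βδ)/(3β)
  have hcsmall : |(α^2+3*β*δ)/(3*β)| ≤ β*(norm (k - (α:ℂ)/(3*(β:ℂ))))^2/8 := by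
    rw [abs_div, abs_of_pos (by positivity : (0:ℝ) < 3*β), div_le_iff₀ (by positivity)]
    linarith [hA]
  refine ⟨?_, ?_, ?_⟩
  · -- case D0
    intro hk
    obtain ⟨hy0, hE0⟩ := clD0_subset β α δ hβ hk
    have hy2 : 23/32*(norm (k - (α:ℂ)/(3*(β:ℂ))))^2 ≤ k.im^2 := by
      have hc_le : (α^2+3*β*δ)/(3*β) ≤ β*((norm (k - (α:ℂ)/(3*(β:ℂ))))^2/8) :=
        le_trans (le_abs_self _) (by linarith [hcsmall])
      have h1 : β*(3*(norm (k - (α:ℂ)/(3*(β:ℂ))))^2 - 4*k.im^2) ≤ β*((norm (k - (α:ℂ)/(3*(β:ℂ))))^2/8) := by linarith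
      have h2 : 3*(norm (k - (α:ℂ)/(3*(β:ℂ))))^2 - 4*k.im^2 ≤ (norm (k - (α:ℂ)/(3*(β:ℂ))))^2/8 := (mul_le_mul_iff_of_pos_left hβ).mp h1
      linarith
    have hy : 4/5*(norm (k - (α:ℂ)/(3*(β:ℂ)))) ≤ k.im := r_ylb _ _ hy0 hy2 hs_pos
    have hxa := r_xabs _ _ _ hs2 hy2 hs_pos
    have hx_ub : ((k - (α:ℂ)/(3*(β:ℂ)))).re ≤ 3/5*(norm (k - (α:ℂ)/(3*(β:ℂ)))) := (abs_le.mp hxa).2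
    have hx_lb : -(3/5*(norm (k - (α:ℂ)/(3*(β:ℂ))))) ≤ ((k - (α:ℂ)/(3*(β:ℂ)))).re := (abs_le.mp hxa).1
    have habs_tu : |Real.sqrt 3/2*w.re| ≤ 9/10*(29/40*(norm (k - (α:ℂ)/(3*(β:ℂ))))) := by
      exact r_tu0 _ _ (abs_le.mpr ⟨by linarith, by linarith⟩)
    have gap1 : (norm (k - (α:ℂ)/(3*(β:ℂ))))/4 ≤ (k - (nuPlus β α k w)).im := by
      have he : (k - (nuPlus β α k w)).im = 3/2*k.im - Real.sqrt 3/2*w.re := by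
        rw [Complex.sub_im, hνp_im]; ring
      rw [he]
      have := (abs_le.mp habs_tu).2
      linarith
    have gap2 : (norm (k - (α:ℂ)/(3*(β:ℂ))))/4 ≤ (k - (nuMinus β α k w)).im := by
      have he : (k - (nuMinus β α k w)).im = 3/2*k.im + Real.sqrt 3/2*w.re := by
        rw [Complex.sub_im, hνm_im]; ring
      rw [he]
      have := (abs_le.mp habs_tu).1
      linarith
    have hsplit : Complex.exp (Complex.I*k*(ℓ:ℂ)) * DeltaFun β α ℓ k w
        = ((nuPlus β α k w) - (nuMinus β α k w)) + ((nuMinus β α k w) - k)*Complex.exp (Complex.I*(k - (nuPlus β α k w))*(ℓ:ℂ))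
          + (k - (nuPlus β α k w))*Complex.exp (Complex.I*(k - (nuMinus β α k w))*(ℓ:ℂ)) := by
      have h0 : Complex.exp (Complex.I*k*(ℓ:ℂ)) * Complex.exp (-Complex.I*k*(ℓ:ℂ)) = 1 := by
        rw [← Complex.exp_add, show Complex.I*k*(ℓ:ℂ) + -Complex.I*k*(ℓ:ℂ) = 0 by ring,
          Complex.exp_zero]
      have e1 : Complex.exp (Complex.I*(k - (nuPlus β α k w))*(ℓ:ℂ))
          = Complex.exp (Complex.I*k*(ℓ:ℂ)) * Complex.exp (-Complex.I*(nuPlus β α k w)*(ℓ:ℂ)) := by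
        rw [← Complex.exp_add]; congr 1; ring
      have e2 : Complex.exp (Complex.I*(k - (nuMinus β α k w))*(ℓ:ℂ))
          = Complex.exp (Complex.I*k*(ℓ:ℂ)) * Complex.exp (-Complex.I*(nuMinus β α k w)*(ℓ:ℂ)) := by
        rw [← Complex.exp_add]; congr 1; ring
      unfold DeltaFun
      rw [e1, e2]
      linear_combination ((nuPlus β α k w) - (nuMinus β α k w)) * h0
    rw [hsplit]
    exact main_est ℓ (norm (k - (α:ℂ)/(3*(β:ℂ)))) hℓ hs_pos hsl _ _ _ _ _ hc0_lb hcp_ub hcm_ub gap1 gap2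
  · -- case Dp
    intro hk
    obtain ⟨hy0, hx0, hE0⟩ := clDp_subset β α δ hβ hk
    have hy2 : k.im^2 ≤ 25/32*(norm (k - (α:ℂ)/(3*(β:ℂ))))^2 := by
      have hc_le : -(β*((norm (k - (α:ℂ)/(3*(β:ℂ))))^2/8)) ≤ (α^2+3*β*δ)/(3*β) :=
        le_trans (by linarith [hcsmall]) (neg_abs_le _)
      have h1 : β*(-((norm (k - (α:ℂ)/(3*(β:ℂ))))^2/8)) ≤ β*(3*(norm (k - (α:ℂ)/(3*(β:ℂ))))^2 - 4*k.im^2) := by linarith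
      have h2 : -((norm (k - (α:ℂ)/(3*(β:ℂ))))^2/8) ≤ 3*(norm (k - (α:ℂ)/(3*(β:ℂ))))^2 - 4*k.im^2 := (mul_le_mul_iff_of_pos_left hβ).mp h1
      linarith
    have hx : 9/20*(norm (k - (α:ℂ)/(3*(β:ℂ)))) ≤ ((k - (α:ℂ)/(3*(β:ℂ)))).re := r_xp _ _ _ hs2 hy2 hx0 hs_pos
    have hu : 13/40*(norm (k - (α:ℂ)/(3*(β:ℂ)))) ≤ w.re := by linarith
    have htu := (r_tup _ _ hu hs_pos).1
    have htu2 := (r_tup _ _ hu hs_pos).2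
    have gap1 : (norm (k - (α:ℂ)/(3*(β:ℂ))))/4 ≤ ((nuPlus β α k w) - k).im := by
      have he : ((nuPlus β α k w) - k).im = -(3/2)*k.im + Real.sqrt 3/2*w.re := by
        rw [Complex.sub_im, hνp_im]; ring
      rw [he]
      linarith
    have gap2 : (norm (k - (α:ℂ)/(3*(β:ℂ))))/4 ≤ ((nuPlus β α k w) - (nuMinus β α k w)).im := by
      have he : ((nuPlus β α k w) - (nuMinus β α k w)).im = Real.sqrt 3*w.re := by
        rw [Complex.sub_im, hνp_im, hνm_im]; ring
      rw [he]
      linarith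
    have hsplit : Complex.exp (Complex.I*(nuPlus β α k w)*(ℓ:ℂ)) * DeltaFun β α ℓ k w
        = ((nuMinus β α k w) - k) + ((nuPlus β α k w) - (nuMinus β α k w))*Complex.exp (Complex.I*((nuPlus β α k w) - k)*(ℓ:ℂ))
          + (k - (nuPlus β α k w))*Complex.exp (Complex.I*((nuPlus β α k w) - (nuMinus β α k w))*(ℓ:ℂ)) := by
      have h0 : Complex.exp (Complex.I*(nuPlus β α k w)*(ℓ:ℂ)) * Complex.exp (-Complex.I*(nuPlus β α k w)*(ℓ:ℂ)) = 1 := by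
        rw [← Complex.exp_add, show Complex.I*(nuPlus β α k w)*(ℓ:ℂ) + -Complex.I*(nuPlus β α k w)*(ℓ:ℂ) = 0 by ring,
          Complex.exp_zero]
      have e1 : Complex.exp (Complex.I*((nuPlus β α k w) - k)*(ℓ:ℂ))
          = Complex.exp (Complex.I*(nuPlus β α k w)*(ℓ:ℂ)) * Complex.exp (-Complex.I*k*(ℓ:ℂ)) := by
        rw [← Complex.exp_add]; congr 1; ring
      have e2 : Complex.exp (Complex.I*((nuPlus β α k w) - (nuMinus β α k w))*(ℓ:ℂ))
          = Complex.exp (Complex.I*(nuPlus β α k w)*(ℓ:ℂ)) * Complex.exp (-Complex.I*(nuMinus β α k w)*(ℓ:ℂ)) := by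
        rw [← Complex.exp_add]; congr 1; ring
      unfold DeltaFun
      rw [e1, e2]
      linear_combination ((nuMinus β α k w) - k) * h0
    rw [hsplit]
    exact main_est ℓ (norm (k - (α:ℂ)/(3*(β:ℂ)))) hℓ hs_pos hsl _ _ _ _ _ hcp_lb hc0_ub hcm_ub gap1 gap2
  · -- case Dm
    intro hk
    obtain ⟨hy0, hx0, hE0⟩ := clDm_subset β α δ hβ hk
    have hy2 : k.im^2 ≤ 25/32*(norm (k - (α:ℂ)/(3*(β:ℂ))))^2 := by
      have hc_le : -(β*((norm (k - (α:ℂ)/(3*(β:ℂ))))^2/8)) ≤ (α^2+3*β*δ)/(3*β) :=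
        le_trans (by linarith [hcsmall]) (neg_abs_le _)
      have h1 : β*(-((norm (k - (α:ℂ)/(3*(β:ℂ))))^2/8)) ≤ β*(3*(norm (k - (α:ℂ)/(3*(β:ℂ))))^2 - 4*k.im^2) := by linarith
      have h2 : -((norm (k - (α:ℂ)/(3*(β:ℂ))))^2/8) ≤ 3*(norm (k - (α:ℂ)/(3*(β:ℂ))))^2 - 4*k.im^2 := (mul_le_mul_iff_of_pos_left hβ).mp h1
      linarith
    have hx : ((k - (α:ℂ)/(3*(β:ℂ)))).re ≤ -(9/20*(norm (k - (α:ℂ)/(3*(β:ℂ))))) := by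
      have := r_xp (norm (k - (α:ℂ)/(3*(β:ℂ)))) (-((k - (α:ℂ)/(3*(β:ℂ))).re)) k.im (by linear_combination hs2) hy2 (by linarith) hs_pos
      linarith
    have hu : w.re ≤ -(13/40*(norm (k - (α:ℂ)/(3*(β:ℂ))))) := by linarith
    have htu' := (r_tup (-w.re) _ (by linarith) hs_pos).1
    have htu2' := (r_tup (-w.re) _ (by linarith) hs_pos).2
    have htu : Real.sqrt 3/2*w.re ≤ -(17/20*(13/40*(norm (k - (α:ℂ)/(3*(β:ℂ)))))) := by linarith
    have htu2 : Real.sqrt 3*w.re ≤ -((norm (k - (α:ℂ)/(3*(β:ℂ))))/4) := by linarith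
    have gap1 : (norm (k - (α:ℂ)/(3*(β:ℂ))))/4 ≤ ((nuMinus β α k w) - k).im := by
      have he : ((nuMinus β α k w) - k).im = -(3/2)*k.im - Real.sqrt 3/2*w.re := by
        rw [Complex.sub_im, hνm_im]; ring
      rw [he]
      linarith
    have gap2 : (norm (k - (α:ℂ)/(3*(β:ℂ))))/4 ≤ ((nuMinus β α k w) - (nuPlus β α k w)).im := by
      have he : ((nuMinus β α k w) - (nuPlus β α k w)).im = -(Real.sqrt 3*w.re) := by
        rw [Complex.sub_im, hνp_im, hνm_im]; ring
      rw [he]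
      linarith
    have hsplit : Complex.exp (Complex.I*(nuMinus β α k w)*(ℓ:ℂ)) * DeltaFun β α ℓ k w
        = (k - (nuPlus β α k w)) + ((nuPlus β α k w) - (nuMinus β α k w))*Complex.exp (Complex.I*((nuMinus β α k w) - k)*(ℓ:ℂ))
          + ((nuMinus β α k w) - k)*Complex.exp (Complex.I*((nuMinus β α k w) - (nuPlus β α k w))*(ℓ:ℂ)) := by
      have h0 : Complex.exp (Complex.I*(nuMinus β α k w)*(ℓ:ℂ)) * Complex.exp (-Complex.I*(nuMinus β α k w)*(ℓ:ℂ)) = 1 := by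
        rw [← Complex.exp_add, show Complex.I*(nuMinus β α k w)*(ℓ:ℂ) + -Complex.I*(nuMinus β α k w)*(ℓ:ℂ) = 0 by ring,
          Complex.exp_zero]
      have e1 : Complex.exp (Complex.I*((nuMinus β α k w) - k)*(ℓ:ℂ))
          = Complex.exp (Complex.I*(nuMinus β α k w)*(ℓ:ℂ)) * Complex.exp (-Complex.I*k*(ℓ:ℂ)) := by
        rw [← Complex.exp_add]; congr 1; ring
      have e2 : Complex.exp (Complex.I*((nuMinus β α k w) - (nuPlus β α k w))*(ℓ:ℂ))
          = Complex.exp (Complex.I*(nuMinus β α k w)*(ℓ:ℂ)) * Complex.exp (-Complex.I*(nuPlus β α k w)*(ℓ:ℂ)) := by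
        rw [← Complex.exp_add]; congr 1; ring
      unfold DeltaFun
      rw [e1, e2]
      linear_combination (k - (nuPlus β α k w)) * h0
    rw [hsplit]
    exact main_est ℓ (norm (k - (α:ℂ)/(3*(β:ℂ)))) hℓ hs_pos hsl _ _ _ _ _ hcm_lb hc0_ub hcp_ub gap1 gap2
end
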